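/- arXiv:1209.0666 — 6 statements merged into one kernel-verified Lean document; each statement's English description precedes it below -/
import Mathlib

section
/- Let Ω = ⋃_{i=1}^n (α_i, β_i) be a finite union of open intervals with α_1 < β_1 < α_2 < ... < α_n < β_n, and let p be a positive integer such that all endpoints α_i, β_i lie in (1/p)ℤ. If Λ ⊆ ℝ is a spectrum for Ω (i.e. {e^{2πiλx} : λ ∈ Λ} is an orthogonal basis of L²(Ω)), then Λ + p = Λ, i.e. p is a period of Λ. -/
open MeasureTheory Complex Set Bornology

/-- The exponential function `e_λ(x) = e^{2πiλx}`. -/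
noncomputable def expf (l : ℝ) : ℝ → ℂ := fun x =>
  Complex.exp (2 * Real.pi * Complex.I * (l : ℂ) * (x : ℂ))

/-- `Λ` is a spectrum for `Ω`: the exponentials `e_λ`, `λ ∈ Λ`, form an
orthogonal basis of `L²(Ω)` (mutually orthogonal and complete). -/
def IsSpectrum (Ω Λ : Set ℝ) : Prop :=
  (∀ l ∈ Λ, ∀ m ∈ Λ, l ≠ m →
    (∫ x in Ω, expf l x * (starRingEnd ℂ) (expf m x)) = 0) ∧
  (∀ f : ℝ → ℂ, MemLp f 2 (volume.restrict Ω) →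
    (∀ l ∈ Λ, (∫ x in Ω, f x * (starRingEnd ℂ) (expf l x)) = 0) →
    f =ᵐ[volume.restrict Ω] 0)

lemma expf_add (s t x : ℝ) : expf (s + t) x = expf s x * expf t x := by
  simp only [expf, ← Complex.exp_add]
  push_cast
  ring_nf

lemma conj_expf (m x : ℝ) : (starRingEnd ℂ) (expf m x) = expf (-m) x := by
  simp only [expf, ← Complex.exp_conj, map_mul, map_ofNat, Complex.conj_I,
    Complex.conj_ofReal]
  push_cast
  ring_nf

lemma expf_lattice (p : ℕ) (hp : 0 < p) (k : ℤ) : expf (p : ℝ) ((k : ℝ) / p) = 1 := by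
  have hp' : ((p : ℕ) : ℂ) ≠ 0 := Nat.cast_ne_zero.mpr hp.ne'
  have h : (2 * (Real.pi : ℂ) * Complex.I * ((p : ℝ) : ℂ) * (((k : ℝ) / p : ℝ) : ℂ))
      = (k : ℂ) * (2 * Real.pi * Complex.I) := by
    push_cast
    field_simp
  rw [expf, h, Complex.exp_int_mul_two_pi_mul_I]

lemma expf_lattice_neg (p : ℕ) (hp : 0 < p) (k : ℤ) : expf (-(p : ℝ)) ((k : ℝ) / p) = 1 := by
  have hp' : ((p : ℕ) : ℂ) ≠ 0 := Nat.cast_ne_zero.mpr hp.ne'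
  have h : (2 * (Real.pi : ℂ) * Complex.I * ((-(p:ℝ) : ℝ) : ℂ) * (((k : ℝ) / p : ℝ) : ℂ))
      = ((-k : ℤ) : ℂ) * (2 * Real.pi * Complex.I) := by
    push_cast
    field_simp
  rw [expf, h, Complex.exp_int_mul_two_pi_mul_I]

lemma continuous_expf (t : ℝ) : Continuous (expf t) := by
  unfold expf; fun_prop

lemma integral_expf_Ioo (t a b : ℝ) (ht : t ≠ 0) (hab : a ≤ b) :
    ∫ x in Ioo a b, expf t x
      = (expf t b - expf t a) / (2 * Real.pi * Complex.I * t) := by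
  have hc : (2 * (Real.pi : ℂ) * Complex.I * (t : ℂ)) ≠ 0 := by
    simp [Real.pi_ne_zero, Complex.I_ne_zero, ht, Complex.ofReal_ne_zero]
  rw [← integral_Ioc_eq_integral_Ioo, ← intervalIntegral.integral_of_le hab]
  simpa [expf, mul_comm] using integral_exp_mul_complex (a := a) (b := b) hc

lemma Z_formula (n : ℕ) (α β : Fin n → ℝ) (hab : ∀ i, α i < β i)
    (hord : ∀ i j : Fin n, i < j → β i < α j) (t : ℝ) (ht : t ≠ 0) :
    ∫ x in ⋃ i, Ioo (α i) (β i), expf t x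
      = (∑ i, (expf t (β i) - expf t (α i))) / (2 * Real.pi * Complex.I * t) := by
  have hdisj : Pairwise (Function.onFun Disjoint fun i => Ioo (α i) (β i)) := by
    have key : ∀ i j : Fin n, i < j → Disjoint (Ioo (α i) (β i)) (Ioo (α j) (β j)) := by
      intro i j hij
      apply Set.disjoint_left.mpr
      rintro x ⟨_, h2⟩ ⟨h3, _⟩
      have := hord i j hij
      linarith
    intro i j hij
    rcases hij.lt_or_gt with h | h
    · exact key i j h
    · exact (key j i h).symm
  have hint : ∀ i, IntegrableOn (expf t) (Ioo (α i) (β i)) volume := fun i =>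
    ((continuous_expf t).integrableOn_Icc).mono_set Ioo_subset_Icc_self
  rw [integral_iUnion (fun i => measurableSet_Ioo) hdisj
    (integrableOn_finite_iUnion.mpr hint), tsum_fintype, Finset.sum_div]
  exact Finset.sum_congr rfl fun i _ => by
    rw [integral_expf_Ioo t _ _ ht (hab i).le]

theorem spectrum_of_union_of_intervals_with_endpoints_in_invP_lattice_is_periodic
    (n : ℕ) (hn : 0 < n) (α β : Fin n → ℝ)
    (hab : ∀ i, α i < β i)
    (hord : ∀ i j : Fin n, i < j → β i < α j)
    (p : ℕ) (hp : 0 < p)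
    (hα : ∀ i, ∃ k : ℤ, α i = (k : ℝ) / p)
    (hβ : ∀ i, ∃ k : ℤ, β i = (k : ℝ) / p)
    (Ω : Set ℝ) (hΩ : Ω = ⋃ i, Ioo (α i) (β i))
    (Λ : Set ℝ) (hspec : IsSpectrum Ω Λ) :
    ∀ x : ℝ, x ∈ Λ ↔ x + p ∈ Λ := by
  obtain ⟨horth, hcomp⟩ := hspec
  have hpR : ((p : ℕ) : ℝ) ≠ 0 := Nat.cast_ne_zero.mpr hp.ne'
  -- measure facts
  have hΩfin : volume Ω < ⊤ := by
    rw [hΩ]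
    refine lt_of_le_of_lt (measure_iUnion_le _) ?_
    rw [tsum_fintype]
    exact ENNReal.sum_lt_top.mpr fun i _ => measure_Ioo_lt_top
  have hΩpos : 0 < volume Ω := by
    have i0 : Fin n := ⟨0, hn⟩
    have h1 : (0 : ENNReal) < volume (Ioo (α i0) (β i0)) := by
      rw [Real.volume_Ioo]
      exact ENNReal.ofReal_pos.mpr (sub_pos.mpr (hab i0))
    exact lt_of_lt_of_le h1 (measure_mono (hΩ ▸ subset_iUnion (fun i => Ioo (α i) (β i)) i0))
  haveI hfin : IsFiniteMeasure (volume.restrict Ω) :=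
    ⟨by rwa [Measure.restrict_apply_univ]⟩
  have hmem : ∀ l : ℝ, MemLp (expf l) 2 (volume.restrict Ω) := by
    intro l
    refine MemLp.of_bound ((continuous_expf l).aestronglyMeasurable) 1 ?_
    filter_upwards with x
    have hre : (2 * (Real.pi : ℂ) * Complex.I * (l : ℂ) * (x : ℂ)).re = 0 := by
      simp
    rw [expf, Complex.norm_exp, hre, Real.exp_zero]
  have hne : ∀ l : ℝ, ¬ (expf l =ᵐ[volume.restrict Ω] 0) := by
    intro l h
    have h0 : volume.restrict Ω {x | ¬ expf l x = (0 : ℝ → ℂ) x} = 0 := ae_iff.mp h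
    have huniv : {x : ℝ | ¬ expf l x = (0 : ℝ → ℂ) x} = univ :=
      eq_univ_of_forall fun x => by simp [expf, Complex.exp_ne_zero]
    rw [huniv, Measure.restrict_apply_univ] at h0
    exact absurd h0 hΩpos.ne'
  set Z : ℝ → ℂ := fun t => ∫ x in Ω, expf t x with hZdef
  set N : ℝ → ℂ := fun t => ∑ i, (expf t (β i) - expf t (α i)) with hNdef
  have hinner : ∀ l m : ℝ,
      (∫ x in Ω, expf l x * (starRingEnd ℂ) (expf m x)) = Z (l - m) := by
    intro l m
    have hx : ∀ x : ℝ, expf l x * (starRingEnd ℂ) (expf m x) = expf (l - m) x := by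
      intro x
      rw [conj_expf, ← expf_add, sub_eq_add_neg]
    simp only [hx, hZdef]
  have hZf : ∀ t : ℝ, t ≠ 0 → Z t = N t / (2 * Real.pi * Complex.I * t) := by
    intro t ht
    rw [hZdef, hΩ]
    exact Z_formula n α β hab hord t ht
  have hNshift : ∀ t : ℝ, N (t + p) = N t := by
    intro t
    refine Finset.sum_congr rfl fun i _ => ?_
    obtain ⟨k, hk⟩ := hβ i
    obtain ⟨k', hk'⟩ := hα i
    rw [expf_add, expf_add, hk, hk', expf_lattice p hp, expf_lattice p hp, mul_one, mul_one]
  have hNp : N (p : ℝ) = 0 := by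
    refine Finset.sum_eq_zero fun i _ => ?_
    obtain ⟨k, hk⟩ := hβ i
    obtain ⟨k', hk'⟩ := hα i
    rw [hk, hk', expf_lattice p hp, expf_lattice p hp, sub_self]
  have hNnp : N (-(p : ℝ)) = 0 := by
    refine Finset.sum_eq_zero fun i _ => ?_
    obtain ⟨k, hk⟩ := hβ i
    obtain ⟨k', hk'⟩ := hα i
    rw [hk, hk', expf_lattice_neg p hp, expf_lattice_neg p hp, sub_self]
  have hZp : Z (p : ℝ) = 0 := by rw [hZf _ hpR, hNp, zero_div]
  have hZnp : Z (-(p : ℝ)) = 0 := by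
    rw [hZf _ (neg_ne_zero.mpr hpR), hNnp, zero_div]
  have hden : ∀ t : ℝ, t ≠ 0 → ((2 : ℂ) * Real.pi * Complex.I * (t : ℂ)) ≠ 0 := by
    intro t ht
    simp [Real.pi_ne_zero, Complex.I_ne_zero, ht, Complex.ofReal_ne_zero]
  have hiff : ∀ t : ℝ, t ≠ 0 → t + p ≠ 0 → (Z t = 0 ↔ Z (t + p) = 0) := by
    intro t ht htp
    rw [hZf t ht, hZf (t + p) htp, hNshift t, div_eq_zero_iff, div_eq_zero_iff,
      or_iff_left (hden t ht), or_iff_left (hden (t + p) htp)]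
  have horthZ : ∀ l ∈ Λ, ∀ m ∈ Λ, l ≠ m → Z (l - m) = 0 := by
    intro l hl m hm hlm
    rw [← hinner]
    exact horth l hl m hm hlm
  intro x
  constructor
  · intro hx
    by_contra hxp
    have key : ∀ m ∈ Λ, (∫ y in Ω, expf (x + p) y * (starRingEnd ℂ) (expf m y)) = 0 := by
      intro m hm
      rw [hinner]
      rcases eq_or_ne m x with rfl | hmx
      · rw [show m + (p : ℝ) - m = (p : ℝ) by ring]
        exact hZp
      · have ht : x - m ≠ 0 := sub_ne_zero_of_ne (Ne.symm hmx)
        have htp : (x - m) + p ≠ 0 := by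
          intro h
          exact hxp (by rw [show x + (p : ℝ) = m by linarith]; exact hm)
        have h0 : Z (x - m) = 0 := horthZ x hx m hm (Ne.symm hmx)
        have h1 := (hiff (x - m) ht htp).mp h0
        rwa [show x - m + (p : ℝ) = x + p - m by ring] at h1
    exact hne (x + p) (hcomp _ (hmem _) key)
  · intro hxp
    by_contra hx
    have key : ∀ m ∈ Λ, (∫ y in Ω, expf x y * (starRingEnd ℂ) (expf m y)) = 0 := by
      intro m hm
      rw [hinner]
      rcases eq_or_ne m (x + p) with rfl | hmx
      · rw [show x - (x + (p : ℝ)) = -(p : ℝ) by ring]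
        exact hZnp
      · have ht : x - m ≠ 0 := sub_ne_zero_of_ne (fun h => hx (h ▸ hm))
        have htp : (x - m) + p ≠ 0 := by
          intro h
          exact hmx (by linarith)
        have h0 : Z (x + p - m) = 0 := horthZ (x + p) hxp m hm (Ne.symm hmx)
        exact (hiff (x - m) ht htp).mpr
          (by rwa [show x - m + (p : ℝ) = x + p - m by ring])
    exact hne x (hcomp _ (hmem _) key)
end

section
/- Let Ω = ⋃_{i=1}^n (α_i, β_i) with integer endpoints α_1 < β_1 < ... < α_n < β_n, and suppose Ω is spectral with a spectrum Λ whose minimal period equals k/|Ω| for some positive integer k. Then k divides |Ω| (which is a positive integer). -/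
open MeasureTheory Complex Set Bornology

lemma expf_mul_conj (l m x : ℝ) :
    expf l x * (starRingEnd ℂ) (expf m x)
      = Complex.exp (2 * Real.pi * Complex.I * ((l : ℂ) - (m : ℂ)) * (x : ℂ)) := by
  have h : (starRingEnd ℂ) (expf m x)
      = Complex.exp (-(2 * Real.pi * Complex.I * (m : ℂ) * (x : ℂ))) := by
    rw [expf, ← Complex.exp_conj]
    congr 1
    simp only [map_mul, map_ofNat, Complex.conj_I, Complex.conj_ofReal]
    ring
  rw [h, expf, ← Complex.exp_add]
  congr 1
  ring

lemma two_pi_I_mul_ne_zero {t : ℝ} (ht : t ≠ 0) :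
    (2 * (Real.pi : ℂ) * Complex.I * (t : ℂ)) ≠ 0 :=
  mul_ne_zero (mul_ne_zero (mul_ne_zero two_ne_zero
    (Complex.ofReal_ne_zero.2 Real.pi_ne_zero)) Complex.I_ne_zero)
    (Complex.ofReal_ne_zero.2 ht)

lemma F_eq (n : ℕ) (α β : Fin n → ℤ) (hab : ∀ i, α i < β i)
    (hdisj : Pairwise (Function.onFun Disjoint fun i => Ioo ((α i : ℝ)) ((β i : ℝ))))
    (t : ℝ) (ht : t ≠ 0) :
    (∫ x in (⋃ i, Ioo ((α i : ℝ)) ((β i : ℝ))),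
        Complex.exp (2 * Real.pi * Complex.I * (t : ℂ) * (x : ℂ)))
      = (∑ i, (Complex.exp (2 * Real.pi * Complex.I * (t : ℂ) * ((β i : ℤ) : ℂ))
          - Complex.exp (2 * Real.pi * Complex.I * (t : ℂ) * ((α i : ℤ) : ℂ))))
        / (2 * Real.pi * Complex.I * (t : ℂ)) := by
  set c : ℂ := 2 * Real.pi * Complex.I * (t : ℂ) with hc
  have hcne : c ≠ 0 := two_pi_I_mul_ne_zero ht
  have hcont : Continuous fun x : ℝ => Complex.exp (c * (x : ℂ)) := by fun_prop
  have hint : ∀ i, IntegrableOn (fun x : ℝ => Complex.exp (c * (x : ℂ)))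
      (Ioo ((α i : ℝ)) ((β i : ℝ))) := fun i =>
    (hcont.integrableOn_Icc).mono_set Ioo_subset_Icc_self
  have hi : ∀ i, (∫ x in Ioo ((α i : ℝ)) ((β i : ℝ)), Complex.exp (c * (x : ℂ)))
      = (Complex.exp (c * ((β i : ℤ) : ℂ)) - Complex.exp (c * ((α i : ℤ) : ℂ))) / c := by
    intro i
    have hle : (α i : ℝ) ≤ (β i : ℝ) := by exact_mod_cast (hab i).le
    rw [← integral_Ioc_eq_integral_Ioo, ← intervalIntegral.integral_of_le hle,
      integral_exp_mul_complex hcne]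
    norm_cast
  rw [integral_iUnion (fun i => measurableSet_Ioo) hdisj
    (integrableOn_finite_iUnion.2 fun i => hint i), tsum_fintype]
  simp_rw [hi]
  rw [← Finset.sum_div]


theorem minimal_period_of_spectrum_of_integer_intervals_divides_measure
    (n : ℕ) (hn : 0 < n) (α β : Fin n → ℤ)
    (hab : ∀ i, α i < β i)
    (hord : ∀ i j : Fin n, i < j → β i < α j)
    (Ω : Set ℝ) (hΩ : Ω = ⋃ i, Ioo ((α i : ℝ)) ((β i : ℝ)))
    (N : ℕ) (hN : 0 < N) (hvol : volume Ω = N)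
    (Λ : Set ℝ) (hspec : IsSpectrum Ω Λ)
    (k : ℕ) (hk : 0 < k)
    (hmin : IsLeast {q : ℝ | 0 < q ∧ ∀ x : ℝ, x ∈ Λ ↔ x + q ∈ Λ} ((k : ℝ) / N)) :
    k ∣ N := by
  classical
  -- basic measure facts
  have hfin : IsFiniteMeasure (volume.restrict Ω) := by
    constructor
    rw [Measure.restrict_apply_univ, hvol]
    exact ENNReal.natCast_lt_top N
  have hdisj : Pairwise (Function.onFun Disjoint fun i => Ioo ((α i : ℝ)) ((β i : ℝ))) := by
    have key : ∀ a b : Fin n, a < b →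
        Disjoint (Ioo ((α a : ℝ)) ((β a : ℝ))) (Ioo ((α b : ℝ)) ((β b : ℝ))) := by
      intro a b hlt
      have h1 : (β a : ℝ) < (α b : ℝ) := by exact_mod_cast hord a b hlt
      refine Set.disjoint_left.2 fun x hx hx' => ?_
      exact absurd (hx.2.trans (h1.trans hx'.1)) (lt_irrefl x)
    intro i j hij
    rcases hij.lt_or_gt with h | h
    · exact key i j h
    · exact (key j i h).symm
  -- the Fourier transform of the indicator of Ω, and its "numerator" G
  set F : ℝ → ℂ := fun t => ∫ x in Ω, Complex.exp (2 * Real.pi * Complex.I * (t : ℂ) * (x : ℂ))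
    with hFdef
  set G : ℝ → ℂ := fun t => ∑ i, (Complex.exp (2 * Real.pi * Complex.I * (t : ℂ) * ((β i : ℤ) : ℂ))
      - Complex.exp (2 * Real.pi * Complex.I * (t : ℂ) * ((α i : ℤ) : ℂ))) with hGdef
  have hFG : ∀ t : ℝ, t ≠ 0 → F t = G t / (2 * Real.pi * Complex.I * (t : ℂ)) := by
    intro t ht
    simp only [hFdef, hGdef, hΩ]
    exact F_eq n α β hab hdisj t ht
  have hG0 : G 0 = 0 := by simp [hGdef]
  have hGper : ∀ t : ℝ, G (t + 1) = G t := by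
    intro t
    have key : ∀ m : ℤ, Complex.exp (2 * Real.pi * Complex.I * ((t : ℂ) + 1) * (m : ℂ))
        = Complex.exp (2 * Real.pi * Complex.I * (t : ℂ) * (m : ℂ)) := by
      intro m
      rw [show 2 * (Real.pi : ℂ) * Complex.I * ((t : ℂ) + 1) * (m : ℂ)
          = 2 * Real.pi * Complex.I * (t : ℂ) * (m : ℂ) + (m : ℂ) * (2 * Real.pi * Complex.I)
          by ring, Complex.exp_add, Complex.exp_int_mul_two_pi_mul_I, mul_one]
    simp only [hGdef]
    push_cast
    simp_rw [key]
  have hGzero : ∀ t : ℝ, t ≠ 0 → F t = 0 → G t = 0 := by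
    intro t ht h0
    have := (hFG t ht).symm.trans h0
    rcases div_eq_zero_iff.1 this with h | h
    · exact h
    · exact absurd h (two_pi_I_mul_ne_zero ht)
  have hF1 : F 1 = 0 := by
    rw [hFG 1 one_ne_zero, show (1 : ℝ) = 0 + 1 by ring, hGper 0, hG0, zero_div]
  have hFneg1 : F (-1) = 0 := by
    have : G (-1) = 0 := by
      have := hGper (-1); rw [show (-1 : ℝ) + 1 = 0 by ring, hG0] at this
      exact this.symm
    rw [hFG (-1) (by norm_num), this, zero_div]
  have hstepup : ∀ t : ℝ, t ≠ 0 → t + 1 ≠ 0 → F t = 0 → F (t + 1) = 0 := by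
    intro t ht ht1 h0
    rw [hFG (t + 1) ht1, hGper t, hGzero t ht h0, zero_div]
  have hstepdown : ∀ t : ℝ, t ≠ 0 → t - 1 ≠ 0 → F t = 0 → F (t - 1) = 0 := by
    intro t ht ht1 h0
    have hG' : G (t - 1) = G t := by
      have := hGper (t - 1); rw [show t - 1 + 1 = t by ring] at this; exact this.symm
    rw [hFG (t - 1) ht1, hG', hGzero t ht h0, zero_div]
  -- inner products in terms of F
  have hdot : ∀ l m : ℝ,
      (∫ y in Ω, expf l y * (starRingEnd ℂ) (expf m y)) = F (l - m) := by
    intro l m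
    simp only [hFdef]
    refine integral_congr_ae (Filter.Eventually.of_forall fun y => ?_)
    dsimp only
    rw [expf_mul_conj]
    push_cast
    ring_nf
  have horthF : ∀ l ∈ Λ, ∀ m ∈ Λ, l ≠ m → F (l - m) = 0 := by
    intro l hl m hm hlm
    rw [← hdot]
    exact hspec.1 l hl m hm hlm
  -- every exponential is in L² and is not a.e. zero on Ω
  have hmem : ∀ l : ℝ, MemLp (expf l) 2 (volume.restrict Ω) := by
    intro l
    refine MemLp.of_bound ((Continuous.aestronglyMeasurable (by unfold expf; fun_prop))) 1
      (Filter.Eventually.of_forall fun x => ?_)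
    have h : (2 * (Real.pi : ℂ) * Complex.I * (l : ℂ) * (x : ℂ))
        = ((2 * Real.pi * l * x : ℝ) : ℂ) * Complex.I := by push_cast; ring
    simp only [expf, h]
    rw [Complex.norm_exp_ofReal_mul_I]
  have hne : ∀ l : ℝ, ¬ (expf l =ᵐ[volume.restrict Ω] 0) := by
    intro l h
    have h2 : ∀ᵐ x ∂(volume.restrict Ω), False :=
      h.mono fun x hx => by
        simp only [expf, Pi.zero_apply] at hx
        exact Complex.exp_ne_zero _ hx
    rw [Filter.eventually_false_iff_eq_bot, ae_eq_bot, Measure.restrict_eq_zero, hvol] at h2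
    exact absurd h2 (by exact_mod_cast hN.ne')
  -- 1 is a period of Λ
  have hper1 : ∀ x : ℝ, x ∈ Λ ↔ x + 1 ∈ Λ := by
    intro x
    constructor
    · intro hx
      by_contra hx1
      refine hne (x + 1) (hspec.2 _ (hmem _) ?_)
      intro m hm
      rw [hdot]
      rcases eq_or_ne m x with rfl | hmx
      · rw [show m + 1 - m = 1 by ring]; exact hF1
      · have hmx1 : m ≠ x + 1 := fun h => hx1 (h ▸ hm)
        have h0 : F (x - m) = 0 := horthF x hx m hm (fun h => hmx h.symm)
        have := hstepup (x - m) (sub_ne_zero.2 fun h => hmx h.symm)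
          (fun h => hmx1 (by linarith)) h0
        rwa [show x - m + 1 = x + 1 - m by ring] at this
    · intro hx1
      by_contra hx
      refine hne x (hspec.2 _ (hmem _) ?_)
      intro m hm
      rw [hdot]
      rcases eq_or_ne m (x + 1) with rfl | hmx
      · rw [show x - (x + 1) = -1 by ring]; exact hFneg1
      · have hmx0 : m ≠ x := fun h => hx (h ▸ hm)
        have h0 : F (x + 1 - m) = 0 := horthF (x + 1) hx1 m hm (fun h => hmx h.symm)
        have := hstepdown (x + 1 - m) (sub_ne_zero.2 fun h => hmx h.symm)
          (fun h => hmx0 (by linarith)) h0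
        rwa [show x + 1 - m - 1 = x - m by ring] at this
  -- the period arithmetic
  set q : ℝ := (k : ℝ) / N with hqdef
  have hqper : ∀ x : ℝ, x ∈ Λ ↔ x + q ∈ Λ := hmin.1.2
  have hsub : ∀ p : ℝ, (∀ x, x ∈ Λ ↔ x + p ∈ Λ) → (∀ x, x ∈ Λ ↔ x + (p - q) ∈ Λ) := by
    intro p hp x
    have h1 : x + (p - q) ∈ Λ ↔ x + p ∈ Λ := by
      rw [hqper (x + (p - q)), show x + (p - q) + q = x + p by ring]
    rw [h1]; exact hp x
  have hiter : ∀ j : ℕ, ∀ x : ℝ, x ∈ Λ ↔ x + (1 - j * q) ∈ Λ := by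
    intro j
    induction j with
    | zero => simpa using hper1
    | succ j ih =>
      intro x
      have := hsub _ ih x
      rwa [show (1 : ℝ) - j * q - q = 1 - (j + 1 : ℕ) * q by push_cast; ring] at this
  by_contra hndvd
  have hmod : 0 < N % k := Nat.pos_of_ne_zero fun h => hndvd (Nat.dvd_of_mod_eq_zero h)
  have hmodlt : N % k < k := Nat.mod_lt _ hk
  have hNpos : (0 : ℝ) < N := by exact_mod_cast hN
  have hr : (1 : ℝ) - (N / k : ℕ) * q = ((N % k : ℕ) : ℝ) / N := by
    have hNk : (k : ℝ) * ((N / k : ℕ) : ℝ) + ((N % k : ℕ) : ℝ) = N := by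
      exact_mod_cast Nat.div_add_mod N k
    rw [hqdef]
    field_simp
    linarith
  have hrpos : (0 : ℝ) < ((N % k : ℕ) : ℝ) / N := by positivity
  have hrpos' : 0 < 1 - ((N / k : ℕ) : ℝ) * q := by rw [hr]; exact hrpos
  have hle : q ≤ 1 - ((N / k : ℕ) : ℝ) * q := hmin.2 ⟨hrpos', hiter (N / k)⟩
  rw [hr, hqdef] at hle
  have : (k : ℝ) ≤ ((N % k : ℕ) : ℝ) := by
    rwa [div_le_div_iff_of_pos_right hNpos] at hle
  have : (k : ℕ) ≤ N % k := by exact_mod_cast this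
  omega
end

section
/- Let Ω ⊆ ℝ be a bounded Lebesgue measurable set of measure 1. Suppose Ω is spectral with spectrum Λ containing 0 and with period p ∈ ℕ (Λ + p = Λ). Then Ω is a p-fold tile of ℝ by (1/p)ℤ-translations: for almost every x ∈ ℝ, the number of integers j with x ∈ Ω + j/p is exactly p; equivalently ∑_{j∈ℤ} χ_Ω(x + j/p) = p for a.e. x ∈ ℝ. -/
open MeasureTheory Complex Set Bornology

lemma eper (T : ℝ) (hT : 0 < T) (n k : ℤ) (x : ℝ) :
    Complex.exp (2 * (Real.pi:ℂ) * Complex.I * (n:ℂ) * ((x + (k:ℝ)*T : ℝ):ℂ) / (T:ℂ))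
      = Complex.exp (2 * (Real.pi:ℂ) * Complex.I * (n:ℂ) * (x:ℂ) / (T:ℂ)) := by
  have hTne : (T:ℂ) ≠ 0 := by exact_mod_cast hT.ne'
  have : 2 * (Real.pi:ℂ) * Complex.I * (n:ℂ) * ((x + (k:ℝ)*T : ℝ):ℂ) / (T:ℂ)
      = 2 * (Real.pi:ℂ) * Complex.I * (n:ℂ) * (x:ℂ) / (T:ℂ) + ((n*k : ℤ):ℂ) * (2 * (Real.pi:ℂ) * Complex.I) := by
    push_cast
    field_simp
  rw [this, Complex.exp_add, Complex.exp_int_mul_two_pi_mul_I, mul_one]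

lemma unfold_int (Ω : Set ℝ) (hmeas : MeasurableSet Ω) (hfin : volume Ω ≠ ⊤)
    (T : ℝ) (hT : 0 < T) (m : ℕ)
    (hsub : Ω ⊆ Ioc ((-(m:ℝ))*T) ((-(m:ℝ) + (2*m+1))*T)) (n : ℤ) :
    (∫ x in (0:ℝ)..T, Complex.exp (2 * (Real.pi:ℂ) * Complex.I * (n:ℂ) * (x:ℂ) / (T:ℂ)) *
        (∑ i ∈ Finset.range (2*m+1),
          Set.indicator Ω (fun _ => (1:ℂ)) (x + ((-(m:ℝ)) + i)*T)))
      = ∫ x in Ω, Complex.exp (2 * (Real.pi:ℂ) * Complex.I * (n:ℂ) * (x:ℂ) / (T:ℂ)) := by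
  set E : ℝ → ℂ := fun x => Complex.exp (2 * (Real.pi:ℂ) * Complex.I * (n:ℂ) * (x:ℂ) / (T:ℂ)) with hE
  set ind : ℝ → ℂ := Set.indicator Ω (fun _ => (1:ℂ)) with hind
  set h : ℝ → ℂ := fun x => E x * ind x with hh
  have hEcont : Continuous E := by
    apply Complex.continuous_exp.comp
    fun_prop
  have hindmeas : Measurable ind := measurable_const.indicator hmeas
  have hInt : Integrable h := by
    refine Integrable.mono' (g := Set.indicator Ω (fun _ => (1:ℝ)))
      ?_ (hEcont.aestronglyMeasurable.mul hindmeas.aestronglyMeasurable) ?_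
    · rw [integrable_indicator_iff hmeas]
      exact integrableOn_const hfin (by simp)
    · filter_upwards with x
      by_cases hx : x ∈ Ω
      · have harg : 2 * (Real.pi:ℂ) * Complex.I * (n:ℂ) * (x:ℂ) / (T:ℂ)
            = ((2*Real.pi*n*x/T : ℝ):ℂ) * Complex.I := by push_cast; ring
        simp only [hh, hind, hE, Set.indicator_of_mem hx, mul_one]
        rw [harg, Complex.norm_exp_ofReal_mul_I]
      · simp [hh, hind, Set.indicator_of_notMem hx]
  set c : ℕ → ℝ := fun i => ((-(m:ℝ)) + i)*T with hc
  have hterm : ∀ (i : ℕ) (x : ℝ), E x * ind (x + c i) = h (x + c i) := by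
    intro i x
    have hceq : c i = (((i:ℤ) - (m:ℤ) : ℤ):ℝ)*T := by simp only [hc]; push_cast; ring
    simp only [hh]
    congr 1
    rw [hceq]
    exact (eper T hT n ((i:ℤ)-(m:ℤ)) x).symm
  have step1 : (∫ x in (0:ℝ)..T, E x * (∑ i ∈ Finset.range (2*m+1), ind (x + c i)))
      = ∑ i ∈ Finset.range (2*m+1), ∫ x in (0:ℝ)..T, h (x + c i) := by
    rw [← intervalIntegral.integral_finset_sum]
    · congr 1
      funext x
      rw [Finset.mul_sum]
      exact Finset.sum_congr rfl fun i _ => hterm i x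
    · intro i _
      have := (hInt.intervalIntegrable (a := 0 + c i) (b := T + c i)).comp_add_right (c i)
      simpa using this
  have step2 : ∀ i : ℕ, (∫ x in (0:ℝ)..T, h (x + c i))
      = ∫ x in (c i)..(c i + T), h x := by
    intro i
    rw [intervalIntegral.integral_comp_add_right h (c i)]
    congr 1 <;> ring
  have hci : ∀ i : ℕ, c i + T = c (i+1) := by
    intro i; simp only [hc]; push_cast; ring
  have step3 : (∑ i ∈ Finset.range (2*m+1), ∫ x in (c i)..(c i + T), h x)
      = ∫ x in (c 0)..(c (2*m+1)), h x := by
    have := intervalIntegral.sum_integral_adjacent_intervals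
      (a := fun i => c i) (n := 2*m+1)
      (fun i _ => hInt.intervalIntegrable)
    rw [← this]
    exact Finset.sum_congr rfl fun i _ => by rw [hci i]
  have hle : c 0 ≤ c (2*m+1) := by
    simp only [hc]
    push_cast
    nlinarith [hT.le]
  have hindE : ∀ x : ℝ, h x = Ω.indicator E x := by
    intro x; by_cases hx : x ∈ Ω <;> simp [hh, hind, hx]
  have step4 : (∫ x in (c 0)..(c (2*m+1)), h x)
      = ∫ x in Ω, E x := by
    rw [intervalIntegral.integral_of_le hle]
    rw [show (fun x => h x) = Ω.indicator E from funext hindE]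
    rw [setIntegral_indicator hmeas]
    have hss : Ioc (c 0) (c (2*m+1)) ∩ Ω = Ω :=
      Set.inter_eq_right.mpr (fun x hx => by
        have h2 := hsub hx
        simp only [hc]
        push_cast
        convert h2 using 2 <;> ring)
    rw [hss]
  calc (∫ x in (0:ℝ)..T, E x * (∑ i ∈ Finset.range (2*m+1), ind (x + c i)))
      = ∑ i ∈ Finset.range (2*m+1), ∫ x in (0:ℝ)..T, h (x + c i) := step1
    _ = ∑ i ∈ Finset.range (2*m+1), ∫ x in (c i)..(c i + T), h x :=
        Finset.sum_congr rfl fun i _ => step2 i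
    _ = ∫ x in (c 0)..(c (2*m+1)), h x := step3
    _ = ∫ x in Ω, E x := step4

lemma fourierCoeff_constant (T : ℝ) [hT : Fact (0 < T)] (cst : ℂ) (n : ℤ) :
    fourierCoeff (fun _ : AddCircle T => cst) n = if n = 0 then cst else 0 := by
  rw [fourierCoeff_eq_intervalIntegral _ n 0]
  rcases eq_or_ne n 0 with rfl | hn
  · simp only [if_pos rfl, neg_zero]
    have : (fun x : ℝ => (fourier 0 (x : AddCircle T) : ℂ) • cst) = fun _ : ℝ => cst := by
      funext x; rw [fourier_zero]; simp
    rw [this, intervalIntegral.integral_const]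
    rw [smul_smul]
    rw [zero_add, sub_zero, one_div, inv_mul_cancel₀ hT.out.ne', one_smul]
    simp
  · rw [if_neg hn]
    have hTne : (T:ℂ) ≠ 0 := by exact_mod_cast hT.out.ne'
    set cc : ℂ := 2 * (Real.pi:ℂ) * Complex.I * ((-n : ℤ):ℂ) / (T:ℂ) with hcc
    have hccne : cc ≠ 0 := by
      simp only [hcc]
      apply div_ne_zero _ hTne
      apply mul_ne_zero
      apply mul_ne_zero
      apply mul_ne_zero
      · norm_num
      · exact_mod_cast Real.pi_ne_zero
      · exact Complex.I_ne_zero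
      · simpa using hn
    have hint : (fun x : ℝ => (fourier (-n) (x : AddCircle T) : ℂ) • cst)
        = fun x : ℝ => Complex.exp (cc * (x:ℂ)) * cst := by
      funext x
      rw [fourier_coe_apply, smul_eq_mul]
      congr 2
      rw [hcc]; push_cast; ring
    rw [hint, intervalIntegral.integral_mul_const, integral_exp_mul_complex hccne]
    have h1 : cc * ((0:ℝ)+T : ℝ) = ((-n : ℤ):ℂ) * (2 * (Real.pi:ℂ) * Complex.I) := by
      rw [hcc]; push_cast; field_simp; ring
    have h2 : cc * ((0:ℝ):ℂ) = 0 := by simp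
    rw [h1, h2, Complex.exp_int_mul_two_pi_mul_I, Complex.exp_zero, sub_self, zero_div,
      zero_mul, smul_zero]

open AddCircle in
lemma fourierCoeff_congr_ae' {T : ℝ} [hT : Fact (0 < T)] {f g : AddCircle T → ℂ}
    (h : f =ᵐ[haarAddCircle] g) (n : ℤ) : fourierCoeff f n = fourierCoeff g n := by
  simp only [fourierCoeff]
  exact integral_congr_ae (h.mono fun x hx => by simp only []; rw [hx])

theorem spectral_set_with_periodic_spectrum_p_tiles
    (Ω : Set ℝ) (hbd : IsBounded Ω) (hmeas : MeasurableSet Ω)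
    (hvol : volume Ω = 1)
    (Λ : Set ℝ) (hspec : IsSpectrum Ω Λ) (h0 : (0 : ℝ) ∈ Λ)
    (p : ℕ) (hp : 0 < p)
    (hper : ∀ x : ℝ, x ∈ Λ ↔ x + p ∈ Λ) :
    ∀ᵐ x : ℝ ∂volume, ({j : ℤ | x + (j : ℝ) / p ∈ Ω}).ncard = p := by
  classical
  have hpR : (0:ℝ) < p := by exact_mod_cast hp
  set T : ℝ := 1 / p with hTdef
  have hT : 0 < T := by positivity
  haveI : Fact (0 < T) := ⟨hT⟩
  -- Step A: all integer multiples of p lie in Λ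
  have hΛ : ∀ k : ℤ, ((k:ℝ) * p) ∈ Λ := by
    intro k
    induction k using Int.induction_on with
    | zero => simpa using h0
    | succ i ih =>
        have h2 : (((i:ℤ)+1 : ℤ):ℝ) * p = (i:ℝ) * p + p := by push_cast; ring
        rw [h2]
        exact (hper _).1 (by exact_mod_cast ih)
    | pred i ih =>
        have h2 : ((-(i:ℤ)-1 : ℤ):ℝ) * p + p = ((-(i:ℤ) : ℤ):ℝ) * p := by push_cast; ring
        exact (hper _).2 (by rw [h2]; exact_mod_cast ih)
  -- Step B: vanishing of Fourier transform at nonzero multiples of p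
  have horth : ∀ k : ℤ, k ≠ 0 →
      (∫ x in Ω, Complex.exp (2 * (Real.pi:ℂ) * Complex.I * (k:ℂ) * (x:ℂ) / (T:ℂ))) = 0 := by
    intro k hk
    have hne : ((k:ℝ) * p) ≠ (0:ℝ) := by
      apply mul_ne_zero _ hpR.ne'
      exact_mod_cast hk
    have := hspec.1 _ (hΛ k) 0 h0 hne
    have hzero : ∀ x : ℝ, expf 0 x = 1 := by
      intro x; simp [expf]
    have heq : ∀ x : ℝ, expf ((k:ℝ)*p) x * (starRingEnd ℂ) (expf 0 x)
        = Complex.exp (2 * (Real.pi:ℂ) * Complex.I * (k:ℂ) * (x:ℂ) / (T:ℂ)) := by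
      intro x
      rw [hzero x, map_one, mul_one, expf]
      congr 1
      have hTc : (T:ℂ) = 1 / (p:ℂ) := by rw [hTdef]; push_cast; ring
      rw [hTc]
      have hpc : (p:ℂ) ≠ 0 := by exact_mod_cast hpR.ne'
      field_simp
      push_cast
      ring
    rw [← this]
    exact setIntegral_congr_fun hmeas fun x _ => (heq x).symm
  -- Step C: bounds
  obtain ⟨r, hr⟩ := hbd.subset_closedBall 0
  set M : ℝ := |r| + 1 with hMdef
  have hM : Ω ⊆ Icc (-M) M := by
    intro x hx
    have := hr hx
    rw [Real.closedBall_eq_Icc] at this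
    have h1 := this.1; have h2 := this.2
    constructor
    · have : r ≤ |r| := le_abs_self r
      rw [hMdef]; nlinarith [abs_nonneg r]
    · have : r ≤ |r| := le_abs_self r
      rw [hMdef]; nlinarith [abs_nonneg r]
  obtain ⟨m, hm⟩ : ∃ m : ℕ, M + T ≤ m * T := by
    obtain ⟨m, hm⟩ := exists_nat_ge ((M+T)/T)
    exact ⟨m, by rwa [div_le_iff₀ hT] at hm⟩
  have hfin : volume Ω ≠ ⊤ := by rw [hvol]; exact ENNReal.one_ne_top
  have hMpos : 0 < M := by rw [hMdef]; positivity
  -- the sets involved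
  have hsubm : Ω ⊆ Ioc ((-(m:ℝ))*T) ((-(m:ℝ) + (2*(m:ℕ)+1))*T) := by
    intro x hx
    obtain ⟨h1, h2⟩ := hM hx
    constructor
    · nlinarith
    · nlinarith
  set ind : ℝ → ℂ := Set.indicator Ω (fun _ => (1:ℂ)) with hinddef
  set g : ℝ → ℂ := fun x => ∑ i ∈ Finset.range (2*m+1), ind (x + ((-(m:ℝ)) + i)*T)
    with hgdef
  set G : AddCircle T → ℂ := AddCircle.liftIoc T 0 g with hGdef
  have hgm : Measurable g := by
    apply Finset.measurable_sum
    intro i _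
    exact (measurable_const.indicator hmeas).comp (measurable_id.add_const _)
  have hGmeas : Measurable G := by
    exact (hgm.comp measurable_subtype_coe).comp (AddCircle.measurableEquivIoc T 0).measurable
  have hgbdd : ∀ x : ℝ, ‖g x‖ ≤ (2*m+1 : ℝ) := by
    intro x
    rw [hgdef]
    calc ‖∑ i ∈ Finset.range (2*m+1), ind (x + ((-(m:ℝ)) + i)*T)‖
        ≤ ∑ i ∈ Finset.range (2*m+1), ‖ind (x + ((-(m:ℝ)) + i)*T)‖ := norm_sum_le _ _
      _ ≤ ∑ _i ∈ Finset.range (2*m+1), (1:ℝ) := by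
          apply Finset.sum_le_sum
          intro i _
          rw [hinddef]
          by_cases hx : (x + ((-(m:ℝ)) + i)*T) ∈ Ω <;> simp [hx]
      _ = (2*m+1 : ℝ) := by simp
  have hG2 : MemLp G 2 AddCircle.haarAddCircle := by
    apply MemLp.of_bound hGmeas.aestronglyMeasurable (2*m+1 : ℝ)
    filter_upwards with y
    rw [hGdef]
    exact hgbdd _
  -- Step G: Fourier coefficients of G
  have hGcoeff : ∀ n : ℤ, fourierCoeff G n
      = (1/T : ℝ) • ∫ x in Ω, Complex.exp (2 * (Real.pi:ℂ) * Complex.I * ((-n : ℤ):ℂ) * (x:ℂ) / (T:ℂ)) := by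
    intro n
    rw [fourierCoeff_eq_intervalIntegral G n 0]
    congr 1
    have hswap : (∫ x in (0:ℝ)..(0+T), (fourier (-n) (x : AddCircle T) : ℂ) • G ↑x)
        = ∫ x in (0:ℝ)..(0+T),
            Complex.exp (2 * (Real.pi:ℂ) * Complex.I * ((-n : ℤ):ℂ) * (x:ℂ) / (T:ℂ)) * g x := by
      rw [intervalIntegral.integral_of_le (by linarith), intervalIntegral.integral_of_le (by linarith)]
      apply setIntegral_congr_fun measurableSet_Ioc
      intro x hx
      simp only []
      rw [hGdef, AddCircle.liftIoc_coe_apply hx, fourier_coe_apply, smul_eq_mul]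
    rw [hswap, zero_add]
    have := unfold_int Ω hmeas hfin T hT m hsubm (-n)
    rw [hgdef]
    convert this using 1
  have hGzero : fourierCoeff G 0 = (p:ℂ) := by
    rw [hGcoeff 0]
    have h1 : ∀ x : ℝ, x ∈ Ω →
        Complex.exp (2 * (Real.pi:ℂ) * Complex.I * ((-(0:ℤ) : ℤ):ℂ) * (x:ℂ) / (T:ℂ)) = 1 := by
      intro x _; norm_num
    rw [setIntegral_congr_fun hmeas h1, setIntegral_const, measureReal_def, hvol]
    have h2 : (1/T : ℝ) = (p:ℝ) := by rw [hTdef, one_div_one_div]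
    rw [h2]
    simp [Complex.real_smul]
  have hGne : ∀ n : ℤ, n ≠ 0 → fourierCoeff G n = 0 := by
    intro n hn
    rw [hGcoeff n, horth (-n) (neg_ne_zero.mpr hn), smul_zero]
  -- Step H: G is a.e. equal to the constant p
  have hC2 : MemLp (fun _ : AddCircle T => (p:ℂ)) 2 AddCircle.haarAddCircle := memLp_const _
  have hLp : hG2.toLp G = hC2.toLp _ := by
    apply fourierBasis.repr.injective
    ext n
    rw [fourierBasis_repr, fourierBasis_repr,
      fourierCoeff_congr_ae' hG2.coeFn_toLp n, fourierCoeff_congr_ae' hC2.coeFn_toLp n,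
      fourierCoeff_constant]
    rcases eq_or_ne n 0 with rfl | hn
    · rw [if_pos rfl, hGzero]
    · rw [if_neg hn, hGne n hn]
  have hae : G =ᵐ[AddCircle.haarAddCircle] fun _ => (p:ℂ) := by
    have h1 := hG2.coeFn_toLp
    rw [hLp] at h1
    exact h1.symm.trans hC2.coeFn_toLp
  have haevol : G =ᵐ[(volume : Measure (AddCircle T))] fun _ => (p:ℂ) := by
    rw [AddCircle.volume_eq_smul_haarAddCircle]
    exact Measure.ae_smul_measure hae _
  have hpull := (AddCircle.measurePreserving_mk T 0).quasiMeasurePreserving.ae_eq_comp haevol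
  have hg_ae : ∀ᵐ x ∂(volume.restrict (Ioc (0:ℝ) (0+T))), g x = (p:ℂ) := by
    filter_upwards [hpull, ae_restrict_mem measurableSet_Ioc] with x hx hmem
    have hlift : G ((x : ℝ) : AddCircle T) = g x := by
      rw [hGdef]; exact AddCircle.liftIoc_coe_apply hmem
    simp only [Function.comp_apply] at hx
    rw [← hlift]
    exact hx
  -- Step J: on the fundamental domain, g counts the translates
  have hNg : ∀ x ∈ Ioc (0:ℝ) (0+T),
      g x = (({j : ℤ | x + (j:ℝ)/p ∈ Ω}).ncard : ℂ) := by
    intro x hx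
    have hx1 : 0 < x := hx.1
    have hx2 : x ≤ T := by have := hx.2; linarith
    set S : Finset ℕ :=
      (Finset.range (2*m+1)).filter (fun i => x + ((-(m:ℝ)) + i)*T ∈ Ω) with hSdef
    have hsum : g x = (S.card : ℂ) := by
      rw [hgdef]
      simp only [hinddef, Set.indicator_apply]
      rw [Finset.sum_boole, hSdef]
    have hset : {j : ℤ | x + (j:ℝ)/p ∈ Ω}
        = (fun i : ℕ => (i:ℤ) - m) '' (S : Set ℕ) := by
      ext j
      simp only [Set.mem_image, Set.mem_setOf_eq, hSdef, Finset.coe_filter,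
        Finset.mem_range, Set.mem_setOf_eq]
      constructor
      · intro hj
        have hdiv : (j:ℝ)/p = (j:ℝ)*T := by rw [hTdef]; ring
        have hjT : x + (j:ℝ)*T ∈ Ω := by rwa [hdiv] at hj
        obtain ⟨hb1, hb2⟩ := hM hjT
        have hj1 : (-(m:ℤ)) ≤ j := by
          by_contra hcon
          push_neg at hcon
          have h3 : (j:ℝ) + 1 ≤ -(m:ℝ) := by exact_mod_cast hcon
          nlinarith
        have hj2 : j ≤ (m:ℤ) := by
          by_contra hcon
          push_neg at hcon
          have h3 : (m:ℝ) + 1 ≤ (j:ℝ) := by exact_mod_cast hcon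
          nlinarith
        refine ⟨(j + m).toNat, ⟨?_, ?_⟩, ?_⟩
        · omega
        · have hcast : ((-(m:ℝ)) + (((j + m).toNat : ℕ) : ℝ)) = (j:ℝ) := by
            have h0 : (((j + m).toNat : ℕ) : ℤ) = j + m := Int.toNat_of_nonneg (by omega)
            have h1 : (((j+m).toNat : ℕ) : ℝ) = ((j:ℝ) + m) := by exact_mod_cast congrArg (Int.cast : ℤ → ℝ) h0
            rw [h1]; ring
          rw [hcast]
          exact hjT
        · omega
      · rintro ⟨i, ⟨hi1, hi2⟩, rfl⟩
        have hcast : x + (((i:ℤ) - m : ℤ):ℝ)/p = x + ((-(m:ℝ)) + i)*T := by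
          rw [hTdef]; push_cast; ring
        rw [hcast]
        exact hi2
    have hcard : ({j : ℤ | x + (j:ℝ)/p ∈ Ω}).ncard = S.card := by
      rw [hset, Set.ncard_image_of_injective _ (fun a b hab => by
        simp only [sub_left_inj, Int.natCast_inj] at hab; exact hab)]
      exact Set.ncard_coe_finset S
    rw [hsum, hcard]
  -- Step K: a.e. equality on the fundamental domain
  have hN_Ioc : ∀ᵐ x ∂(volume.restrict (Ioc (0:ℝ) (0+T))),
      ({j : ℤ | x + (j:ℝ)/p ∈ Ω}).ncard = p := by
    filter_upwards [hg_ae, ae_restrict_mem measurableSet_Ioc] with x hgx hmem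
    have h1 := (hNg x hmem).symm.trans hgx
    exact_mod_cast h1
  -- Step L: periodization
  have hNper : ∀ (k : ℤ) (x : ℝ),
      ({j : ℤ | (x + (k:ℝ)*T) + (j:ℝ)/p ∈ Ω}).ncard
        = ({j : ℤ | x + (j:ℝ)/p ∈ Ω}).ncard := by
    intro k x
    have hset : {j : ℤ | (x + (k:ℝ)*T) + (j:ℝ)/p ∈ Ω}
        = (fun j : ℤ => j - k) '' {j : ℤ | x + (j:ℝ)/p ∈ Ω} := by
      ext j'
      simp only [Set.mem_image, Set.mem_setOf_eq]
      constructor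
      · intro hj'
        refine ⟨j' + k, ?_, by ring⟩
        have heq : x + ((j' + k : ℤ):ℝ)/p = (x + (k:ℝ)*T) + (j':ℝ)/p := by
          rw [hTdef]; push_cast; field_simp; ring
        rw [heq]; exact hj'
      · rintro ⟨j, hj, rfl⟩
        have heq : (x + (k:ℝ)*T) + ((j - k : ℤ):ℝ)/p = x + (j:ℝ)/p := by
          rw [hTdef]; push_cast; field_simp; ring
        rw [heq]; exact hj
    rw [hset, Set.ncard_image_of_injective _ (fun a b hab => by omega)]
  set B : Set ℝ := {x : ℝ | ¬ ({j : ℤ | x + (j:ℝ)/p ∈ Ω}).ncard = p} with hBdef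
  have hpiece0 : volume (B ∩ Ioc (0:ℝ) (0+T)) = 0 := by
    have h1 := ae_iff.mp hN_Ioc
    rwa [Measure.restrict_apply' measurableSet_Ioc] at h1
  have hpieces : ∀ k : ℤ, volume (B ∩ Ioc ((k:ℝ)*T) ((k:ℝ)*T + T)) = 0 := by
    intro k
    have hpre : (fun x : ℝ => x + (k:ℝ)*T) ⁻¹' (B ∩ Ioc ((k:ℝ)*T) ((k:ℝ)*T + T))
        = B ∩ Ioc (0:ℝ) (0+T) := by
      ext x
      simp only [Set.mem_preimage, Set.mem_inter_iff, Set.mem_Ioc, hBdef, Set.mem_setOf_eq]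
      constructor
      · rintro ⟨hb, h1, h2⟩
        rw [hNper k x] at hb
        exact ⟨hb, by linarith, by linarith⟩
      · rintro ⟨hb, h1, h2⟩
        rw [hNper k x]
        exact ⟨hb, by linarith, by linarith⟩
    calc volume (B ∩ Ioc ((k:ℝ)*T) ((k:ℝ)*T + T))
        = volume ((fun x : ℝ => x + (k:ℝ)*T) ⁻¹' (B ∩ Ioc ((k:ℝ)*T) ((k:ℝ)*T + T))) :=
          (measure_preimage_add_right volume _ _).symm
      _ = volume (B ∩ Ioc (0:ℝ) (0+T)) := by rw [hpre]
      _ = 0 := hpiece0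
  have hcover : B ⊆ ⋃ k : ℤ, (B ∩ Ioc ((k:ℝ)*T) ((k:ℝ)*T + T)) := by
    intro x hxB
    refine Set.mem_iUnion.mpr ⟨⌈x/T⌉ - 1, hxB, ?_, ?_⟩
    · have h1 := Int.ceil_lt_add_one (x/T)
      have h2 : ((⌈x/T⌉ - 1 : ℤ):ℝ) < x / T := by push_cast; linarith
      exact (lt_div_iff₀ hT).mp h2
    · have h3 : x / T ≤ (⌈x/T⌉:ℝ) := Int.le_ceil _
      have h4 : x ≤ (⌈x/T⌉:ℝ) * T := by
        rw [div_le_iff₀ hT] at h3; exact h3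
      push_cast
      nlinarith
  rw [ae_iff]
  exact measure_mono_null hcover (measure_iUnion_null hpieces)
end

section
/- Let Ω ⊆ ℝ be bounded measurable of measure 1, spectral with spectrum Λ = {λ_0 = 0, λ_1, ..., λ_{p-1}} + pℤ. For x ∈ Ω define Ω_x = {j ∈ ℤ : x + j/p ∈ Ω} (so 0 ∈ Ω_x). Suppose there exists a set 𝒯 ⊆ ℤ such that for a.e. x ∈ Ω, Ω_x tiles ℤ by 𝒯 (i.e. Ω_x ⊕ 𝒯 = ℤ, each integer having a unique representation j + t). Then Ω tiles ℝ by (1/p)𝒯: the translates {Ω + t/p : t ∈ 𝒯} partition ℝ up to measure zero. -/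
open MeasureTheory Complex Set Bornology

/-- `Ω` tiles `ℝ` by the translation set `T`: the translates `Ω + t`, `t ∈ T`,
partition `ℝ` up to Lebesgue measure zero. -/
def TilesReal (Ω T : Set ℝ) : Prop :=
  (∀ t ∈ T, ∀ s ∈ T, t ≠ s →
    volume ({x : ℝ | x - t ∈ Ω} ∩ {x : ℝ | x - s ∈ Ω}) = 0) ∧
  volume ({x : ℝ | ∀ t ∈ T, x - t ∉ Ω}) = 0

/-- `A` tiles `ℤ` by `T`: every integer `k` has a unique representation
`k = a + t` with `a ∈ A`, `t ∈ T`. -/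
def TilesZ (A T : Set ℤ) : Prop :=
  ∀ k : ℤ, ∃! q : ℤ × ℤ, q.1 ∈ A ∧ q.2 ∈ T ∧ q.1 + q.2 = k

/-- `(1/p)A` is a spectrum for the `p`-element set `Γ ⊆ ℝ`:
the matrix `((1/√p) e^{2πiλa/p})_{λ∈Γ, a∈A}` is unitary, equivalently
`A` has `p` elements and the rows are mutually orthogonal. -/
def PairSpec (p : ℕ) (Γ : Finset ℝ) (A : Finset ℤ) : Prop :=
  A.card = p ∧ Γ.card = p ∧
  ∀ l ∈ Γ, ∀ m ∈ Γ, l ≠ m →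
    (∑ a ∈ A, Complex.exp (2 * Real.pi * Complex.I * ((l : ℂ) - m) * (a : ℂ) / p)) = 0

lemma norm_E (n : ℤ) (P x : ℝ) : ‖Complex.exp (2 * (Real.pi:ℂ) * Complex.I * (n:ℂ) * (P:ℂ) * (x:ℂ))‖ = 1 := by
  rw [show (2 * (Real.pi:ℂ) * Complex.I * (n:ℂ) * (P:ℂ) * (x:ℂ)) = ((2 * Real.pi * n * P * x : ℝ):ℂ) * Complex.I by push_cast; ring]
  exact Complex.norm_exp_ofReal_mul_I _

lemma E_per (P : ℝ) (hP : P ≠ 0) (n k : ℤ) (x : ℝ) :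
    Complex.exp (2 * (Real.pi:ℂ) * Complex.I * (n:ℂ) * (P:ℂ) * ((x + k / P : ℝ):ℂ))
      = Complex.exp (2 * (Real.pi:ℂ) * Complex.I * (n:ℂ) * (P:ℂ) * (x:ℂ)) := by
  have h : (2 * (Real.pi:ℂ) * Complex.I * (n:ℂ) * (P:ℂ) * ((x + k / P : ℝ):ℂ))
      = 2 * (Real.pi:ℂ) * Complex.I * (n:ℂ) * (P:ℂ) * (x:ℂ) + ((n*k : ℤ):ℂ) * (2 * (Real.pi:ℂ) * Complex.I) := by
    have hPc : (P:ℂ) ≠ 0 := by exact_mod_cast hP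
    push_cast; field_simp
  rw [h, Complex.exp_add, Complex.exp_int_mul_two_pi_mul_I, mul_one]

-- the key integral computation
lemma key_integral
    (Ω : Set ℝ) (hmeas : MeasurableSet Ω) (hvol : volume Ω = 1)
    (P : ℝ) (hP : 0 < P) (K : ℕ)
    (hsub : Ω ⊆ Ioc (-(K:ℝ)/P) (((K:ℝ)+1)/P)) (n : ℤ) :
    (∫ x in (0:ℝ)..(1/P), Complex.exp (2 * (Real.pi:ℂ) * Complex.I * (n:ℂ) * (P:ℂ) * (x:ℂ)) *
        (∑ k ∈ Finset.Icc (-(K:ℤ)) K, Set.indicator Ω (fun _ => (1:ℂ)) (x + k / P)))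
      = ∫ x in Ω, Complex.exp (2 * (Real.pi:ℂ) * Complex.I * (n:ℂ) * (P:ℂ) * (x:ℂ)) := by
  set E : ℝ → ℂ := fun x => Complex.exp (2 * (Real.pi:ℂ) * Complex.I * (n:ℂ) * (P:ℂ) * (x:ℂ)) with hE
  set F : ℝ → ℂ := fun y => E y * Set.indicator Ω (fun _ => (1:ℂ)) y with hF
  have hEcont : Continuous E := Complex.continuous_exp.comp (continuous_const.mul Complex.continuous_ofReal)
  have hFint : Integrable F volume := by
    apply Integrable.bdd_mul _ hEcont.aestronglyMeasurable (c := 1) (ae_of_all _ fun x => (norm_E n P x).le)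
    rw [integrable_indicator_iff hmeas]
    exact integrableOn_const (by rw [hvol]; exact ENNReal.one_ne_top)
  -- expand sum
  have h1 : (∫ x in (0:ℝ)..(1/P), E x * (∑ k ∈ Finset.Icc (-(K:ℤ)) K,
        Set.indicator Ω (fun _ => (1:ℂ)) (x + k / P)))
      = ∑ k ∈ Finset.Icc (-(K:ℤ)) K, ∫ x in (0:ℝ)..(1/P), F (x + k / P) := by
    have hfun : ∀ k : ℤ, (fun x : ℝ => E x * Set.indicator Ω (fun _ => (1:ℂ)) (x + k / P))
        = fun x : ℝ => F (x + k / P) := by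
      intro k; funext x
      simp only [hF]
      rw [show E (x + k/P) = E x from E_per P hP.ne' n k x]
    simp_rw [Finset.mul_sum]
    rw [intervalIntegral.integral_finset_sum]
    · refine Finset.sum_congr rfl fun k _ => ?_
      rw [show (fun x : ℝ => E x * Set.indicator Ω (fun _ => (1:ℂ)) (x + (k:ℝ) / P)) = fun x : ℝ => F (x + (k:ℝ) / P) from hfun k]
    · intro k _
      rw [hfun k]
      exact (hFint.comp_add_right _).intervalIntegrable
  rw [h1]
  -- shift each integral
  have h2 : ∀ k : ℤ, (∫ x in (0:ℝ)..(1/P), F (x + k / P))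
      = ∫ x in ((k:ℝ)/P)..(((k:ℝ)+1)/P), F x := by
    intro k
    rw [intervalIntegral.integral_comp_add_right]
    congr 1
    · rw [zero_add]
    · field_simp; ring
  simp_rw [h2]
  -- reindex and sum adjacent intervals
  set a : ℕ → ℝ := fun j => ((j:ℝ) - K) / P with ha
  have h3 : (∑ k ∈ Finset.Icc (-(K:ℤ)) K, ∫ x in ((k:ℝ)/P)..(((k:ℝ)+1)/P), F x)
      = ∑ j ∈ Finset.range (2*K+1), ∫ x in (a j)..(a (j+1)), F x := by
    refine Finset.sum_nbij' (fun k => (k + K).toNat) (fun j => (j : ℤ) - K) ?_ ?_ ?_ ?_ ?_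
    · intro k hk; simp only [Finset.mem_Icc] at hk; simp only [Finset.mem_range]; omega
    · intro j hj; simp only [Finset.mem_range] at hj; simp only [Finset.mem_Icc]; omega
    · intro k hk; simp only [Finset.mem_Icc] at hk
      show ((k + (K:ℤ)).toNat : ℤ) - K = k; omega
    · intro j hj; simp only [Finset.mem_range] at hj
      show (((j:ℤ) - K) + K).toNat = j; omega
    · intro k hk
      simp only [Finset.mem_Icc] at hk
      have e1 : a ((k + K).toNat) = (k:ℝ)/P := by
        simp only [ha]; congr 1
        have : (((k + K).toNat : ℤ) : ℝ) = (k:ℝ) + K := by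
          have : ((k + K).toNat : ℤ) = k + K := by omega
          rw [this]; push_cast; ring
        push_cast at this ⊢; linarith
      have e2 : a ((k + K).toNat + 1) = ((k:ℝ)+1)/P := by
        simp only [ha]; congr 1
        have : ((((k + K).toNat : ℤ) + 1) : ℝ) = (k:ℝ) + K + 1 := by
          have : ((k + K).toNat : ℤ) = k + K := by omega
          rw [this]; push_cast; ring
        push_cast at this ⊢; linarith
      rw [e1, e2]
  rw [h3, intervalIntegral.sum_integral_adjacent_intervals
    (fun j _ => hFint.intervalIntegrable)]
  -- final: integral over the big interval equals integral over Ω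
  have ha0 : a 0 = -(K:ℝ)/P := by simp [ha]
  have haN : a (2*K+1) = ((K:ℝ)+1)/P := by
    simp only [ha]; congr 1; push_cast; ring
  rw [ha0, haN]
  have hKnn : (0:ℝ) ≤ (K:ℝ) := Nat.cast_nonneg K
  have hle : -(K:ℝ)/P ≤ ((K:ℝ)+1)/P := (div_le_div_iff_of_pos_right hP).mpr (by linarith)
  rw [intervalIntegral.integral_of_le hle]
  have hind : ∀ x:ℝ, F x = Ω.indicator E x := by
    intro x; by_cases h : x ∈ Ω <;> simp [hF, h]
  rw [setIntegral_congr_fun measurableSet_Ioc (fun x _ => hind x),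
    setIntegral_indicator hmeas, inter_eq_right.2 hsub]

-- a.e. point of the Ioc period is covered by some (1/P)ℤ-shift of Ω
lemma ae_period_covered
    (Ω : Set ℝ) (hmeas : MeasurableSet Ω) (hvol : volume Ω = 1)
    (P : ℝ) (hP : 0 < P)
    (hcoef : ∀ n : ℤ, n ≠ 0 →
      (∫ x in Ω, Complex.exp (2 * (Real.pi:ℂ) * Complex.I * (n:ℂ) * (P:ℂ) * (x:ℂ))) = 0)
    (R : ℝ) (hR0 : 0 ≤ R) (hR : ∀ y ∈ Ω, |y| ≤ R) :
    ∀ᵐ x ∂(volume.restrict (Ioc (0:ℝ) (0 + 1/P))), ∃ k : ℤ, x + (k:ℝ) / P ∈ Ω := by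
  haveI hTf : Fact (0 < (1/P)) := ⟨by positivity⟩
  have hPC : (P:ℂ) ≠ 0 := by exact_mod_cast hP.ne'
  set K : ℕ := ⌈R * P⌉₊ + 1 with hK
  have hKgt : R * P < (K:ℝ) := by
    have := Nat.le_ceil (R * P)
    have h2 : ((⌈R * P⌉₊ : ℝ)) < (K:ℝ) := by rw [hK]; push_cast; linarith
    linarith
  have hsub : Ω ⊆ Ioc (-(K:ℝ)/P) (((K:ℝ)+1)/P) := by
    intro y hy
    have h1 := abs_le.1 (hR y hy)
    constructor
    · rw [div_lt_iff₀ hP] at *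
      nlinarith [hKgt]
    · rw [le_div_iff₀ hP] at *
      nlinarith [hKgt]
  set g : ℝ → ℂ := fun x => ∑ k ∈ Finset.Icc (-(K:ℤ)) K, Set.indicator Ω (fun _ => (1:ℂ)) (x + k / P) with hg
  set f0 : AddCircle (1/P) → ℂ := AddCircle.liftIoc (1/P) 0 g with hf0
  have hgmeas : Measurable g := by
    apply Finset.measurable_sum
    intro k _
    exact (measurable_const.indicator hmeas).comp (measurable_id.add_const _)
  have hf0meas : Measurable f0 :=
    (hgmeas.comp measurable_subtype_coe).comp (AddCircle.measurableEquivIoc (1/P) 0).measurable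
  set C : ℝ := ((Finset.Icc (-(K:ℤ)) K).card : ℝ) with hC
  have hgbd : ∀ x : ℝ, ‖g x‖ ≤ C := by
    intro x
    refine (norm_sum_le _ _).trans ?_
    rw [hC]
    calc ∑ k ∈ Finset.Icc (-(K:ℤ)) K, ‖Set.indicator Ω (fun _ => (1:ℂ)) (x + k / P)‖
        ≤ ∑ _k ∈ Finset.Icc (-(K:ℤ)) K, (1:ℝ) := by
          refine Finset.sum_le_sum fun k _ => ?_
          by_cases h : x + (k:ℝ)/P ∈ Ω <;> simp [h]
      _ = _ := by simp
  have hf0mem : MemLp f0 2 AddCircle.haarAddCircle :=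
    (memLp_top_of_bound hf0meas.aestronglyMeasurable C
      (Filter.Eventually.of_forall fun z => hgbd _)).mono_exponent le_top
  -- Fourier coefficients of f0
  have hEeq : ∀ n : ℤ, ∀ x : ℝ, x ∈ Ioc (0:ℝ) (0 + 1/P) →
      (fourier (-n) (x : AddCircle (1/P)) : ℂ) • f0 (x : AddCircle (1/P))
        = Complex.exp (2 * (Real.pi:ℂ) * Complex.I * ((-n : ℤ):ℂ) * (P:ℂ) * (x:ℂ)) * g x := by
    intro n x hx
    rw [hf0, AddCircle.liftIoc_coe_apply hx, smul_eq_mul]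
    congr 1
    rw [fourier_coe_apply]
    congr 1
    have hPne : (P:ℂ) ≠ 0 := by exact_mod_cast hP.ne'
    push_cast
    field_simp
  have hcoeff0 : ∀ n : ℤ, fourierCoeff f0 n
      = (P:ℂ) * ∫ x in (0:ℝ)..(1/P), Complex.exp (2 * (Real.pi:ℂ) * Complex.I * ((-n : ℤ):ℂ) * (P:ℂ) * (x:ℂ)) * g x := by
    intro n
    rw [fourierCoeff_eq_intervalIntegral f0 n 0]
    have h1 : (∫ x in (0:ℝ)..(0 + 1/P), (fourier (-n) (x : AddCircle (1/P)) : ℂ) • f0 (x : AddCircle (1/P)))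
        = ∫ x in (0:ℝ)..(1/P), Complex.exp (2 * (Real.pi:ℂ) * Complex.I * ((-n : ℤ):ℂ) * (P:ℂ) * (x:ℂ)) * g x := by
      rw [zero_add]
      rw [intervalIntegral.integral_of_le (by positivity : (0:ℝ) ≤ 1/P),
        intervalIntegral.integral_of_le (by positivity : (0:ℝ) ≤ 1/P)]
      refine setIntegral_congr_fun measurableSet_Ioc fun x hx => ?_
      exact hEeq n x (by simpa using hx)
    rw [h1]
    have : ((1:ℝ) / (1/P)) = P := by field_simp
    rw [this]
    rw [real_smul]
  have hcoef_f0_ne : ∀ n : ℤ, n ≠ 0 → fourierCoeff f0 n = 0 := by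
    intro n hn
    rw [hcoeff0 n, key_integral Ω hmeas hvol P hP K hsub (-n), hcoef (-n) (by omega), mul_zero]
  have hcoef_f0_0 : fourierCoeff f0 0 = (P:ℂ) := by
    rw [hcoeff0 0, key_integral Ω hmeas hvol P hP K hsub (-0)]
    have : ∀ x : ℝ, Complex.exp (2 * (Real.pi:ℂ) * Complex.I * ((-(0:ℤ) : ℤ):ℂ) * (P:ℂ) * (x:ℂ)) = 1 := by
      intro x; norm_num
    rw [setIntegral_congr_fun hmeas (fun x _ => this x)]
    rw [setIntegral_const, measureReal_def, hvol]
    norm_num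
  -- Fourier coefficients of the constant function P
  have hconst_ne : ∀ n : ℤ, n ≠ 0 → fourierCoeff (fun _ : AddCircle (1/P) => (P:ℂ)) n = 0 := by
    intro n hn
    rw [fourierCoeff_eq_intervalIntegral _ n 0]
    set c : ℂ := 2 * (Real.pi:ℂ) * Complex.I * ((-n:ℤ):ℂ) * (P:ℂ) with hc
    have hcne : c ≠ 0 := by
      rw [hc]
      apply mul_ne_zero (mul_ne_zero (mul_ne_zero (mul_ne_zero two_ne_zero ?_) Complex.I_ne_zero) ?_) ?_
      · exact_mod_cast Real.pi_ne_zero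
      · exact_mod_cast (by omega : -n ≠ 0)
      · exact_mod_cast hP.ne'
    have h1 : (∫ x in (0:ℝ)..(0+1/P), (fourier (-n) (x : AddCircle (1/P)) : ℂ) • (P:ℂ))
        = ∫ x in (0:ℝ)..(1/P), Complex.exp (c * (x:ℂ)) * (P:ℂ) := by
      rw [zero_add]
      apply intervalIntegral.integral_congr
      intro x _
      simp only [smul_eq_mul, fourier_coe_apply]
      congr 2
      rw [hc]
      push_cast
      field_simp
    rw [h1, intervalIntegral.integral_mul_const, integral_exp_mul_complex hcne]
    have e1 : Complex.exp (c * ((1:ℝ)/P : ℝ)) = 1 := by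
      rw [show c * ((1:ℝ)/P : ℝ) = ((-n : ℤ):ℂ) * (2 * (Real.pi:ℂ) * Complex.I) by
        rw [hc]; push_cast; field_simp [hPC]]
      exact Complex.exp_int_mul_two_pi_mul_I _
    have e2 : Complex.exp (c * ((0:ℝ):ℂ)) = 1 := by
      rw [Complex.ofReal_zero, mul_zero, Complex.exp_zero]
    rw [e1, e2, sub_self, zero_div, zero_mul, smul_zero]
  have hconst_0 : fourierCoeff (fun _ : AddCircle (1/P) => (P:ℂ)) 0 = (P:ℂ) := by
    rw [fourierCoeff_eq_intervalIntegral _ 0 0]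
    simp only [neg_zero, fourier_zero, one_smul]
    rw [intervalIntegral.integral_const, zero_add, sub_zero, smul_smul]
    rw [show (1/(1/P)) * (1/P) = 1 by field_simp, one_smul]
  -- the difference function has all Fourier coefficients zero
  set h2f : AddCircle (1/P) → ℂ := fun z => f0 z - (P:ℂ) with hh2
  have hfourint : ∀ (φ : AddCircle (1/P) → ℂ), MemLp φ 2 AddCircle.haarAddCircle → ∀ n : ℤ,
      Integrable (fun z => (fourier (-n) z : ℂ) • φ z) AddCircle.haarAddCircle := by
    intro φ hφ n
    simp_rw [smul_eq_mul]
    refine Integrable.bdd_mul (hφ.integrable one_le_two) (map_continuous _).aestronglyMeasurable (c := 1) (ae_of_all _ fun z => ?_)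
    rw [fourier_apply, Circle.norm_coe]
  have hcd : ∀ n : ℤ, fourierCoeff h2f n
      = fourierCoeff f0 n - fourierCoeff (fun _ : AddCircle (1/P) => (P:ℂ)) n := by
    intro n
    simp only [fourierCoeff, hh2, smul_sub]
    exact integral_sub (hfourint f0 hf0mem n) (hfourint _ (memLp_const _) n)
  have hzero : ∀ n : ℤ, fourierCoeff h2f n = 0 := by
    intro n
    rw [hcd n]
    by_cases hn : n = 0
    · subst hn; rw [hcoef_f0_0, hconst_0, sub_self]
    · rw [hcoef_f0_ne n hn, hconst_ne n hn, sub_self]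
  have hmem2 : MemLp h2f 2 AddCircle.haarAddCircle := hf0mem.sub (memLp_const _)
  set F : Lp ℂ 2 AddCircle.haarAddCircle := hmem2.toLp h2f with hFdef
  have hFae : ⇑F =ᵐ[AddCircle.haarAddCircle] h2f := hmem2.coeFn_toLp
  have hreprF : ∀ n : ℤ, fourierCoeff (⇑F) n = 0 := by
    intro n
    have hco : (fun z => (fourier (-n) z : ℂ) • (⇑F) z)
        =ᵐ[AddCircle.haarAddCircle] (fun z => (fourier (-n) z : ℂ) • h2f z) :=
      hFae.mono (fun z hz => by simp only [hz])
    calc fourierCoeff (⇑F) n = fourierCoeff h2f n := integral_congr_ae hco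
      _ = 0 := hzero n
  have hF0 : F = 0 := by
    have h3 : fourierBasis.repr F = 0 := by
      ext n
      rw [fourierBasis_repr]
      simpa using hreprF n
    simpa using (LinearIsometryEquiv.map_eq_zero_iff _).1 h3
  have hae1 : h2f =ᵐ[AddCircle.haarAddCircle] 0 := by
    refine hFae.symm.trans ?_
    rw [hF0]
    exact Lp.coeFn_zero ℂ 2 _
  have hae2 : ∀ᵐ z ∂(volume : Measure (AddCircle (1/P))), f0 z = (P:ℂ) := by
    rw [AddCircle.volume_eq_smul_haarAddCircle]
    refine Measure.ae_smul_measure ?_ _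
    filter_upwards [hae1] with z hz
    have hz' : f0 z - (P:ℂ) = 0 := hz
    exact sub_eq_zero.1 hz'
  have hq := AddCircle.measurePreserving_mk (1/P) 0
  have hcomp : (fun x : ℝ => f0 (x : AddCircle (1/P)))
      =ᵐ[volume.restrict (Ioc (0:ℝ) (0+1/P))] (fun _ => (P:ℂ)) := by
    have := MeasureTheory.ae_eq_comp (μ := volume.restrict (Ioc (0:ℝ) (0+1/P)))
      (f := fun x : ℝ => (x : AddCircle (1/P))) (g := f0) (g' := fun _ => (P:ℂ))
      AddCircle.measurable_mk'.aemeasurable ?_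
    · exact this
    · rw [hq.map_eq]; exact hae2
  filter_upwards [hcomp, ae_restrict_mem measurableSet_Ioc] with x hx hxIoc
  have hgx : g x = (P:ℂ) := by
    rw [← AddCircle.liftIoc_coe_apply (f := g) hxIoc]
    exact hx
  have hPne : (P:ℂ) ≠ 0 := by exact_mod_cast hP.ne'
  have hsne : g x ≠ 0 := by rw [hgx]; exact hPne
  obtain ⟨k, _, hk⟩ := Finset.exists_ne_zero_of_sum_ne_zero hsne
  refine ⟨k, ?_⟩
  by_contra hmem2'
  exact hk (Set.indicator_of_notMem hmem2' _)

lemma ae_covered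
    (Ω : Set ℝ) (hmeas : MeasurableSet Ω) (hvol : volume Ω = 1)
    (P : ℝ) (hP : 0 < P)
    (hcoef : ∀ n : ℤ, n ≠ 0 →
      (∫ x in Ω, Complex.exp (2 * (Real.pi:ℂ) * Complex.I * (n:ℂ) * (P:ℂ) * (x:ℂ))) = 0)
    (R : ℝ) (hR0 : 0 ≤ R) (hR : ∀ y ∈ Ω, |y| ≤ R) :
    ∀ᵐ x : ℝ, ∃ k : ℤ, x + (k:ℝ) / P ∈ Ω := by
  set Bad : Set ℝ := {x : ℝ | ¬ ∃ k : ℤ, x + (k:ℝ)/P ∈ Ω} with hBadDef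
  have hBad0 : volume (Bad ∩ Ioc (0:ℝ) (0 + 1/P)) = 0 := by
    have h := ae_period_covered Ω hmeas hvol P hP hcoef R hR0 hR
    have h2 := ae_iff.1 h
    rwa [Measure.restrict_apply' measurableSet_Ioc] at h2
  have hshift : ∀ m : ℤ, ∀ x : ℝ,
      ((∃ k : ℤ, (x + (m:ℝ)/P) + (k:ℝ)/P ∈ Ω) ↔ ∃ k : ℤ, x + (k:ℝ)/P ∈ Ω) := by
    intro m x
    constructor
    · rintro ⟨k, hk⟩
      refine ⟨m + k, ?_⟩
      rw [show x + ((m + k : ℤ):ℝ)/P = (x + (m:ℝ)/P) + (k:ℝ)/P by push_cast; ring]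
      exact hk
    · rintro ⟨k, hk⟩
      refine ⟨k - m, ?_⟩
      rw [show (x + (m:ℝ)/P) + ((k - m : ℤ):ℝ)/P = x + (k:ℝ)/P by push_cast; ring]
      exact hk
  have hblock : ∀ m : ℤ, volume (Bad ∩ Ioc ((m:ℝ)/P) (((m:ℝ)+1)/P)) = 0 := by
    intro m
    have hpre : (fun x : ℝ => x + (m:ℝ)/P) ⁻¹' (Bad ∩ Ioc ((m:ℝ)/P) (((m:ℝ)+1)/P))
        = Bad ∩ Ioc (0:ℝ) (0 + 1/P) := by
      ext x
      simp only [mem_preimage, mem_inter_iff, mem_Ioc, hBadDef, mem_setOf_eq]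
      constructor
      · rintro ⟨h1, h2, h3⟩
        refine ⟨fun h => h1 ((hshift m x).2 h), by linarith, ?_⟩
        have : x + (m:ℝ)/P ≤ ((m:ℝ)+1)/P := h3
        have e : ((m:ℝ)+1)/P = (m:ℝ)/P + 1/P := by ring
        linarith [e ▸ this]
      · rintro ⟨h1, h2, h3⟩
        refine ⟨fun h => h1 ((hshift m x).1 h), by linarith, ?_⟩
        have e : ((m:ℝ)+1)/P = (m:ℝ)/P + 1/P := by ring
        rw [e]; linarith
    rw [← measure_preimage_add_right volume ((m:ℝ)/P) (Bad ∩ Ioc ((m:ℝ)/P) (((m:ℝ)+1)/P)),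
      hpre]
    exact hBad0
  have hBadNull : volume Bad = 0 := by
    have hU : Bad ⊆ ⋃ m : ℤ, Bad ∩ Ioc ((m:ℝ)/P) (((m:ℝ)+1)/P) := by
      intro x hx
      refine mem_iUnion.2 ⟨⌈x*P⌉ - 1, hx, ?_, ?_⟩
      · rw [div_lt_iff₀ hP]
        push_cast
        linarith [Int.ceil_lt_add_one (x*P)]
      · rw [le_div_iff₀ hP]
        push_cast
        linarith [Int.le_ceil (x*P)]
    exact measure_mono_null hU (measure_iUnion_null hblock)
  rw [ae_iff]
  exact hBadNull

/-- If the fibers `Ω_x = {j ∈ ℤ : x + j/p ∈ Ω}` of a spectral set `Ω` of measure 1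
with spectrum `{λ_0=0,...,λ_{p-1}} + pℤ` tile `ℤ` by a common tiling set `𝒯 ⊆ ℤ`
(for a.e. `x ∈ Ω`), then `Ω` tiles `ℝ` by `(1/p)𝒯`. -/
theorem common_fiber_tiling_implies_real_tiling
    (Ω : Set ℝ) (hbd : IsBounded Ω) (hmeas : MeasurableSet Ω)
    (hvol : volume Ω = 1)
    (p : ℕ) (hp : 0 < p)
    (lam : Fin p → ℝ) (hlam0 : lam ⟨0, hp⟩ = 0)
    (hlam_mem : ∀ i, lam i ∈ Ico (0 : ℝ) p) (hlam_inj : Function.Injective lam)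
    (Λ : Set ℝ) (hΛ : Λ = {x : ℝ | ∃ i : Fin p, ∃ k : ℤ, x = lam i + k * p})
    (hspec : IsSpectrum Ω Λ)
    (T : Set ℤ)
    (htile : ∀ᵐ x : ℝ ∂(volume.restrict Ω),
      TilesZ {j : ℤ | x + (j : ℝ) / p ∈ Ω} T) :
    TilesReal Ω {x : ℝ | ∃ t ∈ T, x = (t : ℝ) / p} := by
  have hP : (0:ℝ) < p := by exact_mod_cast hp
  set D : Set ℝ := {x : ℝ | ¬ TilesZ {j : ℤ | x + (j:ℝ)/p ∈ Ω} T} ∩ Ω with hDdef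
  have hD : volume D = 0 := by
    have h2 := ae_iff.1 htile
    rwa [Measure.restrict_apply' hmeas] at h2
  constructor
  · rintro t' ⟨t, htT, rfl⟩ s' ⟨s, hsT, rfl⟩ hne
    have hts : t ≠ s := by rintro rfl; exact hne rfl
    have hsubD : {x : ℝ | x - (t:ℝ)/p ∈ Ω} ∩ {x : ℝ | x - (s:ℝ)/p ∈ Ω}
        ⊆ (fun x : ℝ => x + (-((t:ℝ)/p))) ⁻¹' D := by
      rintro x ⟨hx1, hx2⟩
      simp only [mem_setOf_eq] at hx1 hx2
      simp only [mem_preimage, hDdef, mem_inter_iff, mem_setOf_eq]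
      rw [← sub_eq_add_neg]
      refine ⟨?_, hx1⟩
      intro htz
      obtain ⟨q, _, huniq⟩ := htz t
      have h1 : ((0:ℤ), t).1 ∈ {j : ℤ | (x - (t:ℝ)/p) + (j:ℝ)/p ∈ Ω} ∧ ((0:ℤ), t).2 ∈ T
          ∧ ((0:ℤ), t).1 + ((0:ℤ), t).2 = t := by
        refine ⟨?_, htT, by ring⟩
        simp only [mem_setOf_eq, Int.cast_zero, zero_div, add_zero]
        exact hx1
      have h2 : (t - s, s).1 ∈ {j : ℤ | (x - (t:ℝ)/p) + (j:ℝ)/p ∈ Ω} ∧ (t - s, s).2 ∈ T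
          ∧ (t - s, s).1 + (t - s, s).2 = t := by
        refine ⟨?_, hsT, by ring⟩
        simp only [mem_setOf_eq]
        rw [show (x - (t:ℝ)/p) + ((t - s : ℤ):ℝ)/p = x - (s:ℝ)/p by push_cast; ring]
        exact hx2
      have e1 := huniq _ h1
      have e2 := huniq _ h2
      have e3 : ((0:ℤ), t) = ((t - s : ℤ), s) := e1.trans e2.symm
      have e4 : (0:ℤ) = t - s := (Prod.ext_iff.1 e3).1
      exact hts (by omega)
    refine measure_mono_null hsubD ?_
    rw [measure_preimage_add_right]
    exact hD
  · obtain ⟨r, hr⟩ := hbd.subset_closedBall 0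
    set R : ℝ := max r 0 with hRdef
    have hR : ∀ y ∈ Ω, |y| ≤ R := by
      intro y hy
      have h := hr hy
      rw [Metric.mem_closedBall, Real.dist_eq, sub_zero] at h
      exact h.trans (le_max_left _ _)
    have hcoef : ∀ n : ℤ, n ≠ 0 →
        (∫ x in Ω, Complex.exp (2 * (Real.pi:ℂ) * Complex.I * (n:ℂ) * ((p:ℝ):ℂ) * (x:ℂ))) = 0 := by
      intro n hn
      have h0mem : (0:ℝ) ∈ Λ := by
        rw [hΛ]; exact ⟨⟨0, hp⟩, 0, by simp [hlam0]⟩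
      have hmmem : ((-n : ℤ):ℝ) * p ∈ Λ := by
        rw [hΛ]; exact ⟨⟨0, hp⟩, -n, by simp [hlam0]⟩
      have hne0 : (0:ℝ) ≠ ((-n : ℤ):ℝ) * p := by
        intro h
        rcases mul_eq_zero.1 h.symm with h1 | h1
        · have : (-n : ℤ) = 0 := by exact_mod_cast h1
          omega
        · exact hP.ne' h1
      have horth := hspec.1 0 h0mem _ hmmem hne0
      have hpt : ∀ x : ℝ, expf 0 x * (starRingEnd ℂ) (expf (((-n : ℤ):ℝ) * p) x)
          = Complex.exp (2 * (Real.pi:ℂ) * Complex.I * (n:ℂ) * ((p:ℝ):ℂ) * (x:ℂ)) := by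
        intro x
        simp only [expf]
        rw [show (2 * (Real.pi:ℂ) * Complex.I * ((0:ℝ):ℂ) * (x:ℂ)) = 0 by push_cast; ring,
          Complex.exp_zero, one_mul, ← Complex.exp_conj]
        congr 1
        simp only [map_mul, Complex.conj_I, Complex.conj_ofReal, map_ofNat]
        push_cast
        ring
      calc (∫ x in Ω, Complex.exp (2 * (Real.pi:ℂ) * Complex.I * (n:ℂ) * ((p:ℝ):ℂ) * (x:ℂ)))
          = ∫ x in Ω, expf 0 x * (starRingEnd ℂ) (expf (((-n : ℤ):ℝ) * p) x) :=
            integral_congr_ae (ae_of_all _ fun x => (hpt x).symm)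
        _ = 0 := horth
    have hcov := ae_covered Ω hmeas hvol p hP hcoef R (le_max_right r 0) hR
    have hBnull : volume {x : ℝ | ¬ ∃ k : ℤ, x + (k:ℝ)/p ∈ Ω} = 0 := ae_iff.1 hcov
    have hfibnull : volume (⋃ k : ℤ, (fun x : ℝ => x + (k:ℝ)/p) ⁻¹' D) = 0 :=
      measure_iUnion_null fun k => by rw [measure_preimage_add_right]; exact hD
    refine measure_mono_null ?_ (measure_union_null hBnull hfibnull)
    intro x hx
    simp only [mem_setOf_eq] at hx
    by_contra hxn
    rcases not_or.1 hxn with ⟨h1, h2⟩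
    obtain ⟨k, hk⟩ := not_not.1 h1
    have hωD : x + (k:ℝ)/p ∉ D := fun hD' => h2 (mem_iUnion.2 ⟨k, hD'⟩)
    have htz : TilesZ {j : ℤ | (x + (k:ℝ)/p) + (j:ℝ)/p ∈ Ω} T := by
      by_contra hno
      exact hωD ⟨hno, hk⟩
    obtain ⟨⟨j, t⟩, ⟨hj, htT, hsum⟩, _⟩ := htz (-k)
    have hmem : x - (t:ℝ)/p ∈ Ω := by
      rw [show x - (t:ℝ)/p = (x + (k:ℝ)/p) + (j:ℝ)/p by
        rw [show (j:ℝ) = -(k:ℝ) - (t:ℝ) by exact_mod_cast congrArg (Int.cast : ℤ → ℝ) (by omega : j = -k - t)]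
        ring]
      exact hj
    exact hx ((t:ℝ)/p) ⟨t, htT, rfl⟩ hmem
end

section
/- Let Ω ⊆ ℝ be a bounded measurable set of measure 1 and p ∈ ℕ such that Ω p-tiles ℝ by (1/p)ℤ (i.e. ∑_{j∈ℤ} χ_Ω(x + j/p) = p a.e.). For x ∈ ℝ let Ω_x = {k ∈ ℤ : x + k/p ∈ Ω} = {k_0(x) < ... < k_{p-1}(x)}. Then the operator W : L²(Ω) → L²([0,1/p), ℂ^p) defined by (Wf)(y) = (f(y + k_0(y)/p), ..., f(y + k_{p-1}(y)/p))ᵗ is an isometric isomorphism. -/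
open MeasureTheory Complex Set Bornology

lemma keyA {Ω : Set ℝ} (hmeas : MeasurableSet Ω) {p : ℕ} (hp : 0 < p)
    {k : Fin p → ℝ → ℤ} (hkm : ∀ i, Measurable (k i))
    (hk : ∀ᵐ x : ℝ ∂volume, StrictMono (fun i : Fin p => k i x) ∧
      ∀ j : ℤ, (x + (j : ℝ) / p ∈ Ω ↔ ∃ i : Fin p, k i x = j))
    (F : ℝ → ENNReal) (hF : Measurable F) :
    ∫⁻ x in Ω, F x = ∫⁻ y in Ico (0:ℝ) (1 / p), ∑ i, F (y + (k i y : ℝ) / p) := by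
  have hp' : (0:ℝ) < p := by exact_mod_cast hp
  set s : ℤ → Set ℝ := fun j => Ico ((j:ℝ)/p) (((j:ℝ)+1)/p) with hs
  have hsm : ∀ j, MeasurableSet (s j) := fun j => measurableSet_Ico
  have hcover : (⋃ j, s j) = univ := by
    ext x
    simp only [mem_iUnion, mem_univ, iff_true, hs, mem_Ico]
    refine ⟨⌊(p:ℝ) * x⌋, ?_, ?_⟩
    · rw [div_le_iff₀ hp']; rw [mul_comm]; exact Int.floor_le _
    · rw [lt_div_iff₀ hp']; rw [mul_comm]; exact Int.lt_floor_add_one _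
  have hdisj : Pairwise (Function.onFun Disjoint s) := by
    have key : ∀ a b : ℤ, a < b → Disjoint (s a) (s b) := by
      intro a b h
      apply Set.Ico_disjoint_Ico.mpr
      have h1 : ((a:ℝ)+1) ≤ (b:ℝ) := by exact_mod_cast h
      have h2 : ((a:ℝ)+1)/p ≤ (b:ℝ)/p := by gcongr
      exact le_trans (min_le_left _ _) (le_trans h2 (le_max_right _ _))
    intro a b hab
    rcases hab.lt_or_gt with h | h
    · exact key a b h
    · exact (key b a h).symm
  calc ∫⁻ x in Ω, F x = ∫⁻ x, Ω.indicator F x := by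
        rw [lintegral_indicator hmeas]
    _ = ∫⁻ x in ⋃ j, s j, Ω.indicator F x := by rw [hcover, Measure.restrict_univ]
    _ = ∑' j : ℤ, ∫⁻ x in s j, Ω.indicator F x := lintegral_iUnion hsm hdisj _
    _ = ∑' j : ℤ, ∫⁻ y in Ico (0:ℝ) (1/p), Ω.indicator F (y + (j:ℝ)/p) := by
        congr 1; funext j
        have hmp : MeasurePreserving (fun x : ℝ => x + (j:ℝ)/p) volume volume :=
          measurePreserving_add_right volume _
        have := hmp.setLIntegral_comp_preimage_emb
          (MeasurableEquiv.addRight ((j:ℝ)/p)).measurableEmbedding (Ω.indicator F) (s j)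
        have hpre : (fun x : ℝ => x + (j:ℝ)/p) ⁻¹' s j = Ico (0:ℝ) (1/p) := by
          ext y
          simp only [hs, mem_preimage, mem_Ico, add_div]
          constructor
          · rintro ⟨h1, h2⟩; exact ⟨by linarith, by linarith⟩
          · rintro ⟨h1, h2⟩; exact ⟨by linarith, by linarith⟩
        rw [hpre] at this
        exact this.symm
    _ = ∫⁻ y in Ico (0:ℝ) (1/p), ∑' j : ℤ, Ω.indicator F (y + (j:ℝ)/p) := by
        rw [lintegral_tsum]
        intro j
        exact ((hF.indicator hmeas).comp (measurable_id.add_const _)).aemeasurable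
    _ = ∫⁻ y in Ico (0:ℝ) (1/p), ∑ i, F (y + (k i y : ℝ) / p) := by
        apply lintegral_congr_ae
        filter_upwards [ae_restrict_of_ae hk] with y hy
        obtain ⟨hsmono, hiff⟩ := hy
        have hinj : Function.Injective (fun i : Fin p => k i y) := hsmono.injective
        have hsupp : Function.support (fun j : ℤ => Ω.indicator F (y + (j:ℝ)/p))
            ⊆ Set.range (fun i : Fin p => k i y) := by
          intro j hj
          by_contra hc
          apply hj
          have : y + (j:ℝ)/p ∉ Ω := by
            intro hmem
            exact hc (by simpa using (hiff j).mp hmem)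
          simp [Set.indicator_of_notMem this]
        rw [← Function.Injective.tsum_eq hinj hsupp, tsum_fintype]
        apply Finset.sum_congr rfl
        intro i _
        have hmem : y + ((k i y : ℝ))/p ∈ Ω := (hiff (k i y)).mpr ⟨i, rfl⟩
        simp [Set.indicator_of_mem hmem]

lemma aeMem {Ω : Set ℝ} {p : ℕ} {k : Fin p → ℝ → ℤ}
    (hk : ∀ᵐ x : ℝ ∂volume, StrictMono (fun i : Fin p => k i x) ∧
      ∀ j : ℤ, (x + (j : ℝ) / p ∈ Ω ↔ ∃ i : Fin p, k i x = j)) :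
    ∀ᵐ y ∂(volume.restrict (Ico (0:ℝ) (1/p))),
      StrictMono (fun i : Fin p => k i y) ∧ ∀ i, y + (k i y : ℝ) / p ∈ Ω := by
  filter_upwards [ae_restrict_of_ae hk] with y hy
  exact ⟨hy.1, fun i => (hy.2 (k i y)).mpr ⟨i, rfl⟩⟩

lemma measurable_pt {p : ℕ} {k : Fin p → ℝ → ℤ} (hkm : ∀ i, Measurable (k i)) (i : Fin p) :
    Measurable (fun y : ℝ => y + (k i y : ℝ) / p) := by
  apply measurable_id.add
  exact ((measurable_from_top.comp (hkm i)).div_const _ : Measurable fun y => ((k i y : ℝ) / p))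

lemma aeTransfer {Ω : Set ℝ} (hmeas : MeasurableSet Ω) {p : ℕ} (hp : 0 < p)
    {k : Fin p → ℝ → ℤ} (hkm : ∀ i, Measurable (k i))
    (hk : ∀ᵐ x : ℝ ∂volume, StrictMono (fun i : Fin p => k i x) ∧
      ∀ j : ℤ, (x + (j : ℝ) / p ∈ Ω ↔ ∃ i : Fin p, k i x = j))
    {f g : ℝ → ℂ} (h : f =ᵐ[volume.restrict Ω] g) :
    ∀ᵐ y ∂(volume.restrict (Ico (0:ℝ) (1/p))),
      ∀ i, f (y + (k i y : ℝ) / p) = g (y + (k i y : ℝ) / p) := by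
  have hnull : (volume.restrict Ω) {x | ¬ f x = g x} = 0 := ae_iff.mp h
  obtain ⟨t, hsub, htm, ht0⟩ := exists_measurable_superset_of_null hnull
  rw [Measure.restrict_apply htm] at ht0
  set F : ℝ → ENNReal := (t ∩ Ω).indicator (fun _ => 1) with hF
  have hFm : Measurable F := measurable_one.indicator (htm.inter hmeas)
  have h1 : ∫⁻ x in Ω, F x = 0 := by
    apply le_antisymm _ (zero_le)
    calc ∫⁻ x in Ω, F x ≤ ∫⁻ x, F x := lintegral_mono' Measure.restrict_le_self le_rfl
      _ = volume (t ∩ Ω) := lintegral_indicator_one (htm.inter hmeas)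
      _ = 0 := ht0
  have h2 : ∫⁻ y in Ico (0:ℝ) (1/p), ∑ i, F (y + (k i y : ℝ) / p) = 0 := by
    rw [← keyA hmeas hp hkm hk F hFm]; exact h1
  have hintm : Measurable (fun y : ℝ => ∑ i, F (y + (k i y : ℝ) / p)) :=
    Finset.measurable_sum _ (fun i _ => hFm.comp (measurable_pt hkm i))
  have h3 := (lintegral_eq_zero_iff hintm).mp h2
  filter_upwards [h3, aeMem hk] with y hy hmem i
  have : F (y + (k i y : ℝ) / p) = 0 := by
    have := Finset.sum_eq_zero_iff.mp hy i (Finset.mem_univ i)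
    exact this
  by_contra hc
  have hmemt : y + (k i y : ℝ) / p ∈ t ∩ Ω := ⟨hsub hc, hmem.2 i⟩
  rw [hF, Set.indicator_of_mem hmemt] at this
  simp at this

noncomputable def Vmap (p : ℕ) (k : Fin p → ℝ → ℤ) (f : ℝ → ℂ) : ℝ → EuclideanSpace ℂ (Fin p) :=
  fun y => WithLp.toLp 2 (fun i => f (y + (k i y : ℝ) / p))

lemma euclid_sq {p : ℕ} (v : EuclideanSpace ℂ (Fin p)) :
    (‖v‖₊ : ENNReal) ^ (2:ℕ) = ∑ i, (‖v i‖₊ : ENNReal) ^ (2:ℕ) := by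
  have hr : ‖v‖ ^ 2 = ∑ i, ‖v i‖ ^ 2 := by
    rw [EuclideanSpace.norm_eq, Real.sq_sqrt (Finset.sum_nonneg fun i _ => by positivity)]
  have hn : ‖v‖₊ ^ 2 = ∑ i, ‖v i‖₊ ^ 2 := by
    apply NNReal.coe_injective
    push_cast
    exact hr
  rw [← ENNReal.coe_pow, hn]
  push_cast
  rfl

lemma stronglyMeasurable_vmap {p : ℕ} {k : Fin p → ℝ → ℤ} (hkm : ∀ i, Measurable (k i))
    {f : ℝ → ℂ} (hfm : Measurable f) : StronglyMeasurable (Vmap p k f) := by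
  have h1 : Measurable (fun y : ℝ => (fun i => f (y + (k i y : ℝ) / p)) : ℝ → (Fin p → ℂ)) :=
    measurable_pi_lambda _ fun i => hfm.comp (measurable_pt hkm i)
  exact (PiLp.continuous_toLp 2 fun _ : Fin p => ℂ).comp_stronglyMeasurable
    h1.stronglyMeasurable

lemma normEq {Ω : Set ℝ} (hmeas : MeasurableSet Ω) {p : ℕ} (hp : 0 < p)
    {k : Fin p → ℝ → ℤ} (hkm : ∀ i, Measurable (k i))
    (hk : ∀ᵐ x : ℝ ∂volume, StrictMono (fun i : Fin p => k i x) ∧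
      ∀ j : ℤ, (x + (j : ℝ) / p ∈ Ω ↔ ∃ i : Fin p, k i x = j))
    {f : ℝ → ℂ} (hfm : Measurable f) :
    eLpNorm (Vmap p k f) 2 (volume.restrict (Ico (0:ℝ) (1/p))) =
      eLpNorm f 2 (volume.restrict Ω) := by
  rw [eLpNorm_eq_lintegral_rpow_enorm_toReal two_ne_zero ENNReal.ofNat_ne_top,
    eLpNorm_eq_lintegral_rpow_enorm_toReal two_ne_zero ENNReal.ofNat_ne_top]
  congr 1
  have h2 : ENNReal.toReal 2 = ((2:ℕ):ℝ) := by norm_num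
  simp_rw [h2, ENNReal.rpow_natCast, enorm_eq_nnnorm]
  have hFm : Measurable (fun x => (‖f x‖₊ : ENNReal) ^ (2:ℕ)) :=
    (hfm.nnnorm.coe_nnreal_ennreal).pow_const _
  rw [keyA hmeas hp hkm hk _ hFm]
  exact lintegral_congr fun y => euclid_sq (Vmap p k f y)

lemma memVmap {Ω : Set ℝ} (hmeas : MeasurableSet Ω) {p : ℕ} (hp : 0 < p)
    {k : Fin p → ℝ → ℤ} (hkm : ∀ i, Measurable (k i))
    (hk : ∀ᵐ x : ℝ ∂volume, StrictMono (fun i : Fin p => k i x) ∧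
      ∀ j : ℤ, (x + (j : ℝ) / p ∈ Ω ↔ ∃ i : Fin p, k i x = j))
    {f : ℝ → ℂ} (hfm : Measurable f) (hf : MemLp f 2 (volume.restrict Ω)) :
    MemLp (Vmap p k f) 2 (volume.restrict (Ico (0:ℝ) (1/p))) := by
  refine ⟨(stronglyMeasurable_vmap hkm hfm).aestronglyMeasurable, ?_⟩
  rw [normEq hmeas hp hkm hk hfm]
  exact hf.2

lemma vmap_congr {Ω : Set ℝ} (hmeas : MeasurableSet Ω) {p : ℕ} (hp : 0 < p)
    {k : Fin p → ℝ → ℤ} (hkm : ∀ i, Measurable (k i))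
    (hk : ∀ᵐ x : ℝ ∂volume, StrictMono (fun i : Fin p => k i x) ∧
      ∀ j : ℤ, (x + (j : ℝ) / p ∈ Ω ↔ ∃ i : Fin p, k i x = j))
    {f g : ℝ → ℂ} (h : f =ᵐ[volume.restrict Ω] g) :
    Vmap p k f =ᵐ[volume.restrict (Ico (0:ℝ) (1/p))] Vmap p k g := by
  filter_upwards [aeTransfer hmeas hp hkm hk h] with y hy
  simp only [Vmap]
  congr 1
  funext i
  exact hy i


/-- If `Ω` of measure one `p`-tiles `ℝ` by `(1/p)ℤ`, and `k_0(x) < ... < k_{p-1}(x)`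
enumerates `Ω_x = {k ∈ ℤ : x + k/p ∈ Ω}`, then
`W : L²(Ω) → L²([0,1/p), ℂ^p)`, `(Wf)(y) = (f(y + k_i(y)/p))_{i=0}^{p-1}`,
is an isometric isomorphism. -/
theorem slicing_operator_is_isometric_isomorphism
    (Ω : Set ℝ) (hbd : IsBounded Ω) (hmeas : MeasurableSet Ω)
    (hvol : volume Ω = 1)
    (p : ℕ) (hp : 0 < p)
    (htile : ∀ᵐ x : ℝ ∂volume, ({j : ℤ | x + (j : ℝ) / p ∈ Ω}).ncard = p)
    (k : Fin p → ℝ → ℤ) (hkm : ∀ i, Measurable (k i))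
    (hk : ∀ᵐ x : ℝ ∂volume,
      StrictMono (fun i : Fin p => k i x) ∧
      ∀ j : ℤ, (x + (j : ℝ) / p ∈ Ω ↔ ∃ i : Fin p, k i x = j)) :
    ∃ W : Lp ℂ 2 (volume.restrict Ω) ≃ₗᵢ[ℂ]
        Lp (EuclideanSpace ℂ (Fin p)) 2 (volume.restrict (Ico (0 : ℝ) (1 / p))),
      ∀ (f : ℝ → ℂ) (hf : MemLp f 2 (volume.restrict Ω)), (∀ x ∉ Ω, f x = 0) →
        (W (hf.toLp f) : ℝ → EuclideanSpace ℂ (Fin p))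
          =ᵐ[volume.restrict (Ico (0 : ℝ) (1 / p))]
        (fun y => WithLp.toLp 2 (fun i => f (y + (k i y : ℝ) / p)) : ℝ → EuclideanSpace ℂ (Fin p)) := by
  classical
  have hp' : (0:ℝ) < p := by exact_mod_cast hp
  set μ := volume.restrict Ω with hμdef
  set ν := volume.restrict (Ico (0 : ℝ) (1 / (p:ℝ))) with hνdef
  let rep : Lp ℂ 2 μ → ℝ → ℂ := fun F => (Lp.aestronglyMeasurable F).mk F
  have hrep_sm : ∀ F : Lp ℂ 2 μ, StronglyMeasurable (rep F) :=
    fun F => (Lp.aestronglyMeasurable F).stronglyMeasurable_mk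
  have hrep_ae : ∀ F : Lp ℂ 2 μ, (F : ℝ → ℂ) =ᵐ[μ] rep F :=
    fun F => (Lp.aestronglyMeasurable F).ae_eq_mk
  have hrep_mem : ∀ F : Lp ℂ 2 μ, MemLp (rep F) 2 μ :=
    fun F => (Lp.memLp F).ae_eq (hrep_ae F)
  have hmem : ∀ F : Lp ℂ 2 μ, MemLp (Vmap p k (rep F)) 2 ν :=
    fun F => memVmap hmeas hp hkm hk (hrep_sm F).measurable (hrep_mem F)
  let V : Lp ℂ 2 μ →ₗᵢ[ℂ] Lp (EuclideanSpace ℂ (Fin p)) 2 ν :=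
  { toFun := fun F => (hmem F).toLp _
    map_add' := by
      intro F G
      rw [← MemLp.toLp_add (hmem F) (hmem G), MemLp.toLp_eq_toLp_iff]
      have h1 : rep (F + G) =ᵐ[μ] rep F + rep G := by
        have ha := (hrep_ae (F + G)).symm
        have hb := Lp.coeFn_add F G
        have hc := hrep_ae F
        have hd := hrep_ae G
        filter_upwards [ha, hb, hc, hd] with x ha hb hc hd
        rw [ha, hb]; simp only [Pi.add_apply]; rw [hc, hd]
      have h2 : Vmap p k (rep (F + G)) =ᵐ[ν] Vmap p k (rep F + rep G) :=
        vmap_congr hmeas hp hkm hk h1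
      exact h2.trans (Filter.EventuallyEq.of_eq rfl)
    map_smul' := by
      intro c F
      show (hmem (c • F)).toLp _ = (RingHom.id ℂ) c • (hmem F).toLp _
      simp only [RingHom.id_apply]
      rw [← MemLp.toLp_const_smul c (hmem F), MemLp.toLp_eq_toLp_iff]
      have h1 : rep (c • F) =ᵐ[μ] c • rep F := by
        have ha := (hrep_ae (c • F)).symm
        have hb := Lp.coeFn_smul c F
        have hc := hrep_ae F
        filter_upwards [ha, hb, hc] with x ha hb hc
        rw [ha, hb]; simp only [Pi.smul_apply]; rw [hc]
      have h2 : Vmap p k (rep (c • F)) =ᵐ[ν] Vmap p k (c • rep F) :=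
        vmap_congr hmeas hp hkm hk h1
      exact h2.trans (Filter.EventuallyEq.of_eq rfl)
    norm_map' := by
      intro F
      show ‖(hmem F).toLp _‖ = ‖F‖
      rw [Lp.norm_toLp, Lp.norm_def]
      congr 1
      rw [normEq hmeas hp hkm hk (hrep_sm F).measurable]
      exact eLpNorm_congr_ae (hrep_ae F).symm }
  have hVcoe : ∀ F : Lp ℂ 2 μ, V F = (hmem F).toLp (Vmap p k (rep F)) := fun F => rfl
  have hsurj : Function.Surjective V := by
    intro G
    set g : ℝ → EuclideanSpace ℂ (Fin p) := (Lp.aestronglyMeasurable G).mk G with hgdef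
    have hgsm : StronglyMeasurable g := (Lp.aestronglyMeasurable G).stronglyMeasurable_mk
    have hgae : (G : ℝ → EuclideanSpace ℂ (Fin p)) =ᵐ[ν] g := (Lp.aestronglyMeasurable G).ae_eq_mk
    set fr : ℝ → ℝ := fun x => Int.fract ((p:ℝ) * x) / p with hfrdef
    have hfrm : Measurable fr :=
      (measurable_fract.comp (measurable_id.const_mul ((p:ℝ)))).div_const _
    have hgim : ∀ i : Fin p, Measurable (fun x => g (fr x) i) := by
      intro i
      have h1 : StronglyMeasurable (fun x => g (fr x)) := hgsm.comp_measurable hfrm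
      have h2 : Continuous (fun v : EuclideanSpace ℂ (Fin p) => v i) :=
        (EuclideanSpace.proj (𝕜 := ℂ) i).continuous
      exact (h2.comp_stronglyMeasurable h1).measurable
    set f : ℝ → ℂ := fun x => ∑ i, if k i (fr x) = ⌊(p:ℝ) * x⌋ then g (fr x) i else 0 with hfdef
    have hfm : Measurable f := by
      apply Finset.measurable_sum
      intro i _
      have hsetm : MeasurableSet {x : ℝ | k i (fr x) = ⌊(p:ℝ) * x⌋} := by
        have h1 : Measurable (fun x => k i (fr x) - ⌊(p:ℝ) * x⌋) :=
          ((hkm i).comp hfrm).sub (Int.measurable_floor.comp (measurable_id.const_mul _))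
        have h2 : {x : ℝ | k i (fr x) = ⌊(p:ℝ) * x⌋} =
            (fun x => k i (fr x) - ⌊(p:ℝ) * x⌋) ⁻¹' {0} := by
          ext x; simp [sub_eq_zero]
        rw [h2]; exact h1 (measurableSet_singleton 0)
      exact Measurable.ite hsetm (hgim i) measurable_const
    have hVg : Vmap p k f =ᵐ[ν] g := by
      filter_upwards [aeMem hk, ae_restrict_mem measurableSet_Ico] with y hy hyI
      obtain ⟨hsmono, _⟩ := hy
      ext i
      show f (y + (k i y : ℝ) / p) = g y i
      have hpy0 : 0 ≤ (p:ℝ) * y := mul_nonneg hp'.le hyI.1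
      have hpy1 : (p:ℝ) * y < 1 := by
        have h := hyI.2
        rw [lt_div_iff₀ hp'] at h
        linarith [h]
      have harg : (p:ℝ) * (y + (k i y : ℝ) / p) = (p:ℝ) * y + (k i y : ℝ) := by
        field_simp
      have hfr_eq : fr (y + (k i y : ℝ) / p) = y := by
        rw [hfrdef]
        simp only
        rw [harg, Int.fract_add_intCast, Int.fract_eq_self.mpr ⟨hpy0, hpy1⟩]
        field_simp
      have hfl_eq : ⌊(p:ℝ) * (y + (k i y : ℝ) / p)⌋ = k i y := by
        rw [harg, Int.floor_add_intCast, Int.floor_eq_zero_iff.mpr ⟨hpy0, hpy1⟩, zero_add]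
      have hstep : f (y + (k i y : ℝ) / p) = ∑ j, if j = i then g y j else 0 := by
        rw [hfdef]
        simp only
        apply Finset.sum_congr rfl
        intro j _
        rw [hfr_eq, hfl_eq]
        congr 1
        exact propext ⟨fun h => hsmono.injective h, fun h => by rw [h]⟩
      rw [hstep, Finset.sum_ite_eq' Finset.univ i (fun j => g y j)]
      simp
    have hfmem : MemLp f 2 μ := by
      refine ⟨hfm.aestronglyMeasurable, ?_⟩
      have hne := normEq hmeas hp hkm hk (f := f) hfm
      have heq : eLpNorm f 2 μ = eLpNorm (G : ℝ → EuclideanSpace ℂ (Fin p)) 2 ν := by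
        rw [hμdef, ← hne, ← hνdef, eLpNorm_congr_ae (hVg.trans hgae.symm)]
      rw [heq]
      exact (Lp.memLp G).2
    refine ⟨hfmem.toLp f, ?_⟩
    rw [hVcoe]
    have h1 : rep (hfmem.toLp f) =ᵐ[μ] f := (hrep_ae _).symm.trans (MemLp.coeFn_toLp hfmem)
    have h2 : Vmap p k (rep (hfmem.toLp f)) =ᵐ[ν] (G : ℝ → EuclideanSpace ℂ (Fin p)) :=
      ((vmap_congr hmeas hp hkm hk h1).trans hVg).trans hgae.symm
    rw [← Lp.toLp_coeFn G (Lp.memLp G), MemLp.toLp_eq_toLp_iff]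
    exact h2
  refine ⟨LinearIsometryEquiv.ofSurjective V hsurj, ?_⟩
  intro f hf hzero
  have hWV : (LinearIsometryEquiv.ofSurjective V hsurj) (hf.toLp f) = V (hf.toLp f) := by
    rw [LinearIsometryEquiv.coe_ofSurjective]
  rw [hWV, hVcoe]
  have h1 : rep (hf.toLp f) =ᵐ[μ] f := (hrep_ae _).symm.trans (MemLp.coeFn_toLp hf)
  exact (MemLp.coeFn_toLp _).trans (vmap_congr hmeas hp hkm hk h1)
end

section
/- Let Γ = {λ_0, ..., λ_{p-1}} ⊆ ℝ be a p-element set and A ⊆ ℤ a p-element set such that (1/p)A is a spectrum for Γ. For bounded measurable Ω of measure 1 that p-tiles ℝ by (1/p)ℤ, suppose that for a.e. y ∈ [0,1/p) the vectors v_i(y) = (1/√p)(e^{2πiλ_i k_0(y)/p}, ..., e^{2πiλ_i k_{p-1}(y)/p})ᵗ, i = 0,...,p−1, form an orthonormal basis of ℂ^p. Then the functions F_{i,n}(y) = e^{2πi(λ_i+np)y} v_i(y)·√p, i ∈ {0,...,p−1}, n ∈ ℤ, form an orthogonal basis of L²([0,1/p), ℂ^p). -/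
open MeasureTheory Complex Set Bornology

section Auxiliary

lemma aux_lin {p : ℕ} (hp : 0 < p) (M : Matrix (Fin p) (Fin p) ℂ)
    (h : ∀ i i', (∑ j : Fin p, M i j * (starRingEnd ℂ) (M i' j)) = if i = i' then (p : ℂ) else 0)
    (v : Fin p → ℂ) (hv : ∀ i, (∑ j : Fin p, (starRingEnd ℂ) (M i j) * v j) = 0) : v = 0 := by
  have hp' : (p : ℂ) ≠ 0 := Nat.cast_ne_zero.2 hp.ne'
  have h1 : M * M.conjTranspose = (p : ℂ) • 1 := by
    ext i i'
    simp only [Matrix.mul_apply, Matrix.conjTranspose_apply, Matrix.smul_apply, Matrix.one_apply,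
      smul_eq_mul, mul_ite, mul_one, mul_zero]
    exact h i i'
  have h2 : M * ((p : ℂ)⁻¹ • M.conjTranspose) = 1 := by
    rw [Matrix.mul_smul, h1, smul_smul, inv_mul_cancel₀ hp', one_smul]
  have h3 : ((p : ℂ)⁻¹ • M.conjTranspose) * M = 1 := mul_eq_one_comm.mp h2
  have h4 : M.conjTranspose * M = (p : ℂ) • 1 := by
    calc M.conjTranspose * M = (p : ℂ) • (((p : ℂ)⁻¹ • M.conjTranspose) * M) := by
          rw [Matrix.smul_mul, smul_smul, mul_inv_cancel₀ hp', one_smul]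
      _ = (p : ℂ) • 1 := by rw [h3]
  have hcol : ∀ j j', (∑ i : Fin p, (starRingEnd ℂ) (M i j) * M i j') = if j = j' then (p : ℂ) else 0 := by
    intro j j'
    have := congrFun (congrFun h4 j) j'
    simpa only [Matrix.mul_apply, Matrix.conjTranspose_apply, Matrix.smul_apply, Matrix.one_apply,
      smul_eq_mul, mul_ite, mul_one, mul_zero, starRingEnd_apply] using this
  have hcol' : ∀ j j', (∑ i : Fin p, M i j * (starRingEnd ℂ) (M i j')) = if j = j' then (p : ℂ) else 0 := by
    intro j j'
    have h5 : (∑ i : Fin p, M i j * (starRingEnd ℂ) (M i j'))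
        = (starRingEnd ℂ) (∑ i : Fin p, (starRingEnd ℂ) (M i j) * M i j') := by
      rw [map_sum]
      exact Finset.sum_congr rfl fun i _ => by rw [map_mul, Complex.conj_conj, mul_comm]
    rw [h5, hcol j j']
    split_ifs <;> simp
  funext j
  have key : (p : ℂ) * v j = 0 := by
    calc (p : ℂ) * v j = ∑ j' : Fin p, (if j = j' then (p : ℂ) else 0) * v j' := by
          simp [ite_mul]
      _ = ∑ j' : Fin p, (∑ i : Fin p, M i j * (starRingEnd ℂ) (M i j')) * v j' :=
          Finset.sum_congr rfl fun j' _ => by rw [hcol']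
      _ = ∑ i : Fin p, M i j * ∑ j' : Fin p, (starRingEnd ℂ) (M i j') * v j' := by
          simp_rw [Finset.sum_mul, Finset.mul_sum]
          rw [Finset.sum_comm]
          exact Finset.sum_congr rfl fun i _ => Finset.sum_congr rfl fun j' _ => by ring
      _ = 0 := by simp [hv]
  simpa [hp'] using key

open AddCircle in
lemma complete_exp {T : ℝ} [hT : Fact (0 < T)] {g : ℝ → ℂ}
    (hg : MemLp g 2 (volume.restrict (Ioc (0 : ℝ) T)))
    (h : ∀ n : ℤ, (∫ y in Ioc (0 : ℝ) T,
      Complex.exp (2 * Real.pi * Complex.I * (n : ℂ) * (y : ℂ) / T) * g y) = 0) :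
    g =ᵐ[volume.restrict (Ioc (0 : ℝ) T)] 0 := by
  have hT0 := hT.out
  have hres : volume.restrict (Ioc (0:ℝ) (0 + T)) = volume.restrict (Ioc (0:ℝ) T) := by
    rw [zero_add]
  set g' : ℝ → ℂ := (hg.1.mk g) with hg'def
  have hg'sm : StronglyMeasurable g' := hg.1.stronglyMeasurable_mk
  have hgg' : g =ᵐ[volume.restrict (Ioc (0 : ℝ) T)] g' := hg.1.ae_eq_mk
  have hg' : MemLp g' 2 (volume.restrict (Ioc (0 : ℝ) T)) := (memLp_congr_ae hgg').mp hg
  set G : AddCircle T → ℂ := AddCircle.liftIoc T 0 g' with hGdef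
  have hGsm : StronglyMeasurable G := by
    have hm : Measurable (fun z : AddCircle T => ((AddCircle.equivIoc T 0 z : Ioc (0:ℝ) (0+T)) : ℝ)) :=
      measurable_subtype_coe.comp (AddCircle.measurableEquivIoc T 0).measurable
    exact hg'sm.comp_measurable hm
  have hGmk : ∀ y ∈ Ioc (0:ℝ) (0 + T), G (y : AddCircle T) = g' y := fun y hy =>
    AddCircle.liftIoc_coe_apply hy
  have hmp := AddCircle.measurePreserving_mk T 0
  rw [hres] at hmp
  have hae : (fun y => G (y : AddCircle T)) =ᵐ[volume.restrict (Ioc (0:ℝ) T)] g' := by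
    rw [← hres]
    exact (ae_restrict_mem measurableSet_Ioc).mono fun y hy => hGmk y hy
  have hGvol : MemLp G 2 (volume : Measure (AddCircle T)) := by
    rw [← hmp.map_eq]
    rw [memLp_map_measure_iff (hGsm.aestronglyMeasurable) (AddCircle.measurable_mk').aemeasurable]
    exact (memLp_congr_ae hae).mpr hg'
  have hvol_eq : (volume : Measure (AddCircle T)) = ENNReal.ofReal T • haarAddCircle :=
    volume_eq_smul_haarAddCircle
  have hT_ne : ENNReal.ofReal T ≠ 0 := by
    simp [ENNReal.ofReal_eq_zero, not_le, hT0]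
  have hG2 : MemLp G 2 (haarAddCircle : Measure (AddCircle T)) := by
    have heq : haarAddCircle = (ENNReal.ofReal T)⁻¹ • (volume : Measure (AddCircle T)) := by
      rw [hvol_eq, smul_smul, ENNReal.inv_mul_cancel hT_ne ENNReal.ofReal_ne_top, one_smul]
    rw [heq]
    exact hGvol.smul_measure (ENNReal.inv_ne_top.mpr hT_ne)
  have hcoeff : ∀ n : ℤ, fourierCoeff G n = 0 := by
    intro n
    rw [fourierCoeff_eq_intervalIntegral G n 0]
    have key : (∫ x in (0:ℝ)..(0 + T), fourier (-n) (x : AddCircle T) • G x) = 0 := by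
      rw [intervalIntegral.integral_of_le (by linarith : (0:ℝ) ≤ 0 + T)]
      rw [show Ioc (0:ℝ) (0+T) = Ioc (0:ℝ) T by rw [zero_add]]
      have heq2 : (∫ y in Ioc (0:ℝ) T, fourier (-n) (y : AddCircle T) • G (y : AddCircle T)) =
          ∫ y in Ioc (0:ℝ) T,
            Complex.exp (2 * Real.pi * Complex.I * ((-n : ℤ) : ℂ) * (y : ℂ) / T) * g y := by
        refine integral_congr_ae ?_
        filter_upwards [hae, hgg'] with y h1 h2
        rw [smul_eq_mul, h1, ← h2, fourier_coe_apply]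
      rw [heq2, h (-n)]
    rw [key, smul_zero]
  set GLp : Lp ℂ 2 (haarAddCircle : Measure (AddCircle T)) := hG2.toLp G with hGLp
  have hrepr : fourierBasis.repr GLp = 0 := by
    apply lp.ext
    funext n
    have hfc : fourierCoeff (GLp : AddCircle T → ℂ) n = fourierCoeff G n := by
      unfold fourierCoeff
      refine integral_congr_ae ?_
      filter_upwards [hG2.coeFn_toLp] with t ht
      rw [ht]
    simp [fourierBasis_repr, hfc, hcoeff n]
  have hGLp0 : GLp = 0 := by
    apply fourierBasis.repr.injective
    simp [hrepr]
  have hGhaar : G =ᵐ[(haarAddCircle : Measure (AddCircle T))] 0 := by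
    refine (hG2.coeFn_toLp.symm).trans ?_
    rw [← hGLp, hGLp0]
    exact Lp.coeFn_zero ℂ 2 _
  have hGvol0 : G =ᵐ[(volume : Measure (AddCircle T))] 0 := by
    rw [hvol_eq]
    exact Measure.ae_smul_measure hGhaar _
  have hfinal := hmp.quasiMeasurePreserving.ae_eq_comp hGvol0
  calc g =ᵐ[volume.restrict (Ioc (0:ℝ) T)] g' := hgg'
    _ =ᵐ[volume.restrict (Ioc (0:ℝ) T)] (fun y => G (y : AddCircle T)) := hae.symm
    _ =ᵐ[volume.restrict (Ioc (0:ℝ) T)] 0 := hfinal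

end Auxiliary

/-- If for a.e. `y ∈ [0,1/p)` the vectors
`v_i(y) = (1/√p)(e^{2πiλ_i k_j(y)/p})_j` form an orthonormal basis of `ℂ^p`, then
the functions `F_{i,n}(y) = e^{2πi(λ_i+np)y}·(e^{2πiλ_i k_j(y)/p})_j` form an
orthogonal basis of `L²([0,1/p), ℂ^p)`: they are mutually orthogonal and any
square-integrable `H` orthogonal to all of them vanishes a.e. -/
theorem vector_exponentials_form_orthogonal_basis
    (p : ℕ) (hp : 0 < p)
    (lam : Fin p → ℝ) (hlam_inj : Function.Injective lam)
    (A : Finset ℤ) (hA : PairSpec p (Finset.image lam Finset.univ) A)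
    (Ω : Set ℝ) (hbd : IsBounded Ω) (hmeas : MeasurableSet Ω) (hvol : volume Ω = 1)
    (htile : ∀ᵐ x : ℝ ∂volume, ({j : ℤ | x + (j : ℝ) / p ∈ Ω}).ncard = p)
    (k : Fin p → ℝ → ℤ) (hkm : ∀ i, Measurable (k i))
    (hk : ∀ᵐ x : ℝ ∂volume,
      StrictMono (fun i : Fin p => k i x) ∧
      ∀ j : ℤ, (x + (j : ℝ) / p ∈ Ω ↔ ∃ i : Fin p, k i x = j))
    (honb : ∀ᵐ y : ℝ ∂(volume.restrict (Ico (0 : ℝ) (1 / p))), ∀ i i' : Fin p,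
      (1 / p : ℂ) * ∑ j : Fin p,
        Complex.exp (2 * Real.pi * Complex.I * ((lam i : ℂ) - lam i') * ((k j y : ℤ) : ℂ) / p)
      = if i = i' then 1 else 0)
    (F : Fin p → ℤ → ℝ → Fin p → ℂ)
    (hF : ∀ i n y j, F i n y j =
      Complex.exp (2 * Real.pi * Complex.I * ((lam i : ℂ) + (n : ℂ) * p) * (y : ℂ)) *
      Complex.exp (2 * Real.pi * Complex.I * (lam i : ℂ) * ((k j y : ℤ) : ℂ) / p)) :
    (∀ (i i' : Fin p) (n n' : ℤ), (i, n) ≠ (i', n') →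
      (∫ y in Ico (0 : ℝ) (1 / p),
        ∑ j : Fin p, F i n y j * (starRingEnd ℂ) (F i' n' y j)) = 0) ∧
    (∀ H : ℝ → Fin p → ℂ,
      (∀ j : Fin p, MemLp (fun y => H y j) 2 (volume.restrict (Ico (0 : ℝ) (1 / p)))) →
      (∀ (i : Fin p) (n : ℤ),
        (∫ y in Ico (0 : ℝ) (1 / p),
          ∑ j : Fin p, H y j * (starRingEnd ℂ) (F i n y j)) = 0) →
      ∀ j : Fin p, (fun y => H y j)
        =ᵐ[volume.restrict (Ico (0 : ℝ) (1 / p))] 0) := by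
  have hpR : (0:ℝ) < p := by exact_mod_cast hp
  have hpR' : (p : ℝ) ≠ 0 := hpR.ne'
  have hp' : (p : ℂ) ≠ 0 := Nat.cast_ne_zero.2 hp.ne'
  set T : ℝ := 1 / (p : ℝ) with hTdef
  have hTpos : 0 < T := by positivity
  haveI : Fact (0 < T) := ⟨hTpos⟩
  have hrestrict : volume.restrict (Ico (0:ℝ) T) = volume.restrict (Ioc (0:ℝ) T) :=
    Measure.restrict_congr_set Ico_ae_eq_Ioc
  -- product formula
  have hprod : ∀ (i i' : Fin p) (n n' : ℤ) (y : ℝ) (j : Fin p),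
      F i n y j * (starRingEnd ℂ) (F i' n' y j) =
        Complex.exp (2 * Real.pi * Complex.I *
          (((lam i : ℂ) - (lam i' : ℂ)) + ((n : ℂ) - (n' : ℂ)) * p) * (y : ℂ)) *
        Complex.exp (2 * Real.pi * Complex.I * ((lam i : ℂ) - (lam i' : ℂ))
          * ((k j y : ℤ) : ℂ) / p) := by
    intro i i' n n' y j
    rw [hF, hF, map_mul, ← Complex.exp_conj, ← Complex.exp_conj, mul_mul_mul_comm,
      ← Complex.exp_add, ← Complex.exp_add]
    congr 1
    · simp only [map_mul, map_add, Complex.conj_I, Complex.conj_ofReal, map_intCast,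
        map_natCast, map_ofNat]
      ring
    · simp only [map_mul, map_div₀, Complex.conj_I, Complex.conj_ofReal, map_intCast,
        map_natCast, map_ofNat]
      ring
  constructor
  · -- orthogonality
    intro i i' n n' hne
    by_cases hii : i = i'
    · subst hii
      have hnn : n ≠ n' := fun hcon => hne (by rw [hcon])
      set c : ℂ := 2 * Real.pi * Complex.I * (((n : ℂ) - (n' : ℂ)) * p) with hc
      have hc0 : c ≠ 0 := by
        refine mul_ne_zero (mul_ne_zero (mul_ne_zero ?_ ?_) ?_) (mul_ne_zero ?_ hp')
        · norm_num
        · exact Complex.ofReal_ne_zero.mpr Real.pi_ne_zero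
        · exact Complex.I_ne_zero
        · exact sub_ne_zero.mpr (by exact_mod_cast hnn)
      have hint : ∀ y : ℝ, (∑ j : Fin p, F i n y j * (starRingEnd ℂ) (F i n' y j))
          = (p : ℂ) * Complex.exp (c * (y : ℂ)) := by
        intro y
        have hterm : ∀ j : Fin p, F i n y j * (starRingEnd ℂ) (F i n' y j)
            = Complex.exp (c * (y : ℂ)) := by
          intro j
          rw [hprod i i n n' y j, sub_self]
          simp only [zero_add, zero_mul, mul_zero, zero_div, Complex.exp_zero, mul_one]
          rw [hc]
        rw [Finset.sum_congr rfl fun j _ => hterm j, Finset.sum_const, Finset.card_univ,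
          Fintype.card_fin, nsmul_eq_mul]
      calc (∫ y in Ico (0:ℝ) T, ∑ j : Fin p, F i n y j * (starRingEnd ℂ) (F i n' y j))
          = ∫ y in Ico (0:ℝ) T, (p : ℂ) * Complex.exp (c * (y : ℂ)) :=
            integral_congr_ae (Filter.Eventually.of_forall fun y => hint y)
        _ = ∫ y in Ioc (0:ℝ) T, (p : ℂ) * Complex.exp (c * (y : ℂ)) := by rw [hrestrict]
        _ = ∫ y in (0:ℝ)..T, (p : ℂ) * Complex.exp (c * (y : ℂ)) :=
            (intervalIntegral.integral_of_le hTpos.le).symm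
        _ = (p : ℂ) * ∫ y in (0:ℝ)..T, Complex.exp (c * (y : ℂ)) :=
            intervalIntegral.integral_const_mul _ _
        _ = (p : ℂ) * ((Complex.exp (c * (T : ℂ)) - Complex.exp (c * ((0:ℝ) : ℂ))) / c) := by
            rw [integral_exp_mul_complex hc0]
        _ = 0 := by
            have h1 : c * (T : ℂ) = ((n - n' : ℤ) : ℂ) * (2 * Real.pi * Complex.I) := by
              rw [hc, hTdef]
              push_cast
              field_simp
            rw [h1, Complex.exp_int_mul_two_pi_mul_I]
            simp
    · -- i ≠ i' : integrand vanishes a.e.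
      refine integral_eq_zero_of_ae ?_
      filter_upwards [honb] with y hy
      have h0 := hy i i'
      rw [if_neg hii] at h0
      have hsum : (∑ j : Fin p, Complex.exp (2 * Real.pi * Complex.I *
          ((lam i : ℂ) - lam i') * ((k j y : ℤ) : ℂ) / p)) = 0 := by
        rcases mul_eq_zero.mp h0 with h | h
        · exact absurd h (one_div_ne_zero hp')
        · exact h
      calc (∑ j : Fin p, F i n y j * (starRingEnd ℂ) (F i' n' y j))
          = ∑ j : Fin p, Complex.exp (2 * Real.pi * Complex.I *
              (((lam i : ℂ) - (lam i' : ℂ)) + ((n : ℂ) - (n' : ℂ)) * p) * (y : ℂ)) *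
            Complex.exp (2 * Real.pi * Complex.I * ((lam i : ℂ) - (lam i' : ℂ))
              * ((k j y : ℤ) : ℂ) / p) :=
            Finset.sum_congr rfl fun j _ => hprod i i' n n' y j
        _ = Complex.exp (2 * Real.pi * Complex.I *
              (((lam i : ℂ) - (lam i' : ℂ)) + ((n : ℂ) - (n' : ℂ)) * p) * (y : ℂ)) *
            ∑ j : Fin p, Complex.exp (2 * Real.pi * Complex.I * ((lam i : ℂ) - (lam i' : ℂ))
              * ((k j y : ℤ) : ℂ) / p) := (Finset.mul_sum _ _ _).symm
        _ = 0 := by rw [hsum, mul_zero]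
  · -- completeness
    intro H hH horth
    have hkC : ∀ j : Fin p, Measurable (fun y : ℝ => ((k j y : ℤ) : ℂ)) := fun j =>
      measurable_from_top.comp (hkm j)
    have hFmeas : ∀ (i : Fin p) (n : ℤ) (j : Fin p), Measurable (fun y => F i n y j) := by
      intro i n j
      simp_rw [hF]
      apply Measurable.mul
      · exact Complex.measurable_exp.comp (Complex.measurable_ofReal.const_mul _)
      · exact Complex.measurable_exp.comp (((hkC j).const_mul _).div_const _)
    have hFnorm : ∀ (i : Fin p) (n : ℤ) (y : ℝ) (j : Fin p), ‖F i n y j‖ = 1 := by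
      intro i n y j
      rw [hF, norm_mul]
      have e1 : (2 * (Real.pi : ℂ) * Complex.I * ((lam i : ℂ) + (n : ℂ) * p) * (y : ℂ))
          = ((2 * Real.pi * (lam i + (n : ℝ) * p) * y : ℝ) : ℂ) * Complex.I := by
        push_cast; ring
      have e2 : (2 * (Real.pi : ℂ) * Complex.I * (lam i : ℂ) * ((k j y : ℤ) : ℂ) / p)
          = ((2 * Real.pi * lam i * (k j y : ℝ) / p : ℝ) : ℂ) * Complex.I := by
        push_cast; ring
      rw [e1, e2, Complex.norm_exp_ofReal_mul_I, Complex.norm_exp_ofReal_mul_I, mul_one]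
    have hFshift : ∀ (i : Fin p) (n : ℤ) (y : ℝ) (j : Fin p),
        F i n y j = Complex.exp (2 * Real.pi * Complex.I * (n : ℂ) * (p : ℂ) * (y : ℂ)) *
          F i 0 y j := by
      intro i n y j
      rw [hF, hF, ← mul_assoc]
      congr 1
      rw [← Complex.exp_add]
      congr 1
      push_cast
      ring
    set g : Fin p → ℝ → ℂ := fun i y => ∑ j : Fin p, H y j * (starRingEnd ℂ) (F i 0 y j)
      with hgdef
    have hgmem : ∀ i, MemLp (g i) 2 (volume.restrict (Ioc (0:ℝ) T)) := by
      intro i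
      rw [← hrestrict]
      have hmem : MemLp (fun y => ∑ j : Fin p, H y j * (starRingEnd ℂ) (F i 0 y j)) 2
          (volume.restrict (Ico (0:ℝ) T)) := by
        apply memLp_finset_sum Finset.univ
        intro j _
        refine MemLp.of_le (hH j) ((hH j).1.mul ((Complex.continuous_conj.measurable.comp (hFmeas i 0 j)).aestronglyMeasurable)) ?_
        refine Filter.Eventually.of_forall fun y => ?_
        have h1 : ‖H y j * (starRingEnd ℂ) (F i 0 y j)‖ = ‖H y j‖ * ‖F i 0 y j‖ := by
          rw [norm_mul, RCLike.norm_conj]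
        have h2 : ‖F i 0 y j‖ = 1 := by rw [hFnorm]
        rw [h1, h2, mul_one]
      exact hmem
    have hgzero : ∀ i, g i =ᵐ[volume.restrict (Ico (0:ℝ) T)] 0 := by
      intro i
      rw [hrestrict]
      apply complete_exp (hgmem i)
      intro n
      have hpt : ∀ y : ℝ, Complex.exp (2 * Real.pi * Complex.I * (n : ℂ) * (y : ℂ) / (T : ℂ))
          * g i y = ∑ j : Fin p, H y j * (starRingEnd ℂ) (F i (-n) y j) := by
        intro y
        simp only [hgdef]
        rw [Finset.mul_sum]
        refine Finset.sum_congr rfl fun j _ => ?_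
        rw [hFshift i (-n) y j, map_mul, ← Complex.exp_conj]
        have harg : (starRingEnd ℂ) (2 * Real.pi * Complex.I * ((-n : ℤ) : ℂ) * (p : ℂ) * (y : ℂ))
            = 2 * Real.pi * Complex.I * (n : ℂ) * (y : ℂ) / (T : ℂ) := by
          simp only [map_mul, Complex.conj_I, Complex.conj_ofReal, map_intCast, map_natCast,
            map_ofNat]
          rw [hTdef]
          push_cast
          field_simp
        rw [harg]
        ring
      have heq : (∫ y in Ioc (0:ℝ) T,
          Complex.exp (2 * Real.pi * Complex.I * (n : ℂ) * (y : ℂ) / (T : ℂ)) * g i y)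
          = ∫ y in Ioc (0:ℝ) T, ∑ j : Fin p, H y j * (starRingEnd ℂ) (F i (-n) y j) :=
        integral_congr_ae (Filter.Eventually.of_forall fun y => hpt y)
      rw [heq, ← hrestrict]
      exact horth i (-n)
    intro j
    filter_upwards [honb, ae_all_iff.mpr hgzero] with y hy1 hy2
    set M : Matrix (Fin p) (Fin p) ℂ := fun i j' =>
      Complex.exp (2 * Real.pi * Complex.I * (lam i : ℂ) * ((k j' y : ℤ) : ℂ) / p) with hMdef
    have hMapp : ∀ (i j' : Fin p), M i j' =
        Complex.exp (2 * Real.pi * Complex.I * (lam i : ℂ) * ((k j' y : ℤ) : ℂ) / p) :=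
      fun _ _ => rfl
    have hM : ∀ i i', (∑ j' : Fin p, M i j' * (starRingEnd ℂ) (M i' j'))
        = if i = i' then (p : ℂ) else 0 := by
      intro i i'
      have hterm : ∀ j' : Fin p,
          Complex.exp (2 * Real.pi * Complex.I * ((lam i : ℂ) - lam i') * ((k j' y : ℤ) : ℂ) / p)
          = M i j' * (starRingEnd ℂ) (M i' j') := by
        intro j'
        rw [hMapp i j', hMapp i' j', ← Complex.exp_conj, ← Complex.exp_add]
        congr 1
        simp only [map_mul, map_div₀, map_sub, Complex.conj_I, Complex.conj_ofReal, map_intCast,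
          map_natCast, map_ofNat]
        ring
      have h0 := hy1 i i'
      rw [Finset.sum_congr rfl fun j' _ => hterm j'] at h0
      have hsc : (∑ j' : Fin p, M i j' * (starRingEnd ℂ) (M i' j'))
          = (p : ℂ) * ((1 / p : ℂ) * ∑ j' : Fin p, M i j' * (starRingEnd ℂ) (M i' j')) := by
        field_simp
      rw [hsc, h0]
      split_ifs <;> simp
    have hv : ∀ i, (∑ j' : Fin p, (starRingEnd ℂ) (M i j') * H y j') = 0 := by
      intro i
      have h2 : (∑ j' : Fin p, H y j' * (starRingEnd ℂ) (F i 0 y j')) = 0 := by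
        have := hy2 i
        simpa [hgdef] using this
      set E : ℂ := Complex.exp (2 * Real.pi * Complex.I *
        ((lam i : ℂ) + ((0 : ℤ) : ℂ) * (p : ℂ)) * (y : ℂ)) with hEdef
      have hF0 : ∀ j' : Fin p, F i 0 y j' = E * M i j' := fun j' => hF i 0 y j'
      have hsum : (∑ j' : Fin p, H y j' * (starRingEnd ℂ) (F i 0 y j'))
          = (starRingEnd ℂ) E * ∑ j' : Fin p, (starRingEnd ℂ) (M i j') * H y j' := by
        rw [Finset.mul_sum]
        refine Finset.sum_congr rfl fun j' _ => ?_
        rw [hF0 j', map_mul]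
        ring
      rw [hsum] at h2
      have hEne : (starRingEnd ℂ) E ≠ 0 := by
        rw [hEdef, ← Complex.exp_conj]
        exact Complex.exp_ne_zero _
      exact (mul_eq_zero.mp h2).resolve_left hEne
    have hzero := aux_lin hp M hM (fun j' => H y j') hv
    exact congrFun hzero j
end
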